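/- arXiv:1710.10303 — 13 statements merged into one kernel-verified Lean document; each statement's English description precedes it below -/
import Mathlib

section
/- For every positive integer n, the Fibonacci-sum graph G_n is bipartite (equivalently, G_n is 2-colorable, i.e., contains no odd cycle). -/
/-- Vertices of the Fibonacci-sum graph on `{1, 2, ..., n}`. -/
abbrev FibVert (n : ℕ) := {i : ℕ // 1 ≤ i ∧ i ≤ n}

/-- The Fibonacci-sum graph `G_n`: vertices `1, ..., n`, with distinct `i, j`
adjacent iff `i + j` is a Fibonacci number. -/
def fibSumGraph (n : ℕ) : SimpleGraph (FibVert n) where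
  Adj x y := x ≠ y ∧ ∃ m, Nat.fib m = x.val + y.val
  symm := by
    constructor
    rintro x y ⟨hxy, m, hm⟩
    exact ⟨hxy.symm, m, by omega⟩
  loopless := by
    constructor
    rintro x ⟨hxx, -⟩
    exact hxx rfl

lemma lt_fib_add_two (x : ℕ) : x < Nat.fib (x + 2) := by
  induction x with
  | zero => decide
  | succ n ih =>
    show n + 1 < Nat.fib (n + 3)
    have h1 : 1 ≤ Nat.fib (n + 1) := Nat.fib_pos.2 (by omega)
    have h2 : Nat.fib (n + 3) = Nat.fib (n + 1) + Nat.fib (n + 2) := Nat.fib_add_two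
    omega

lemma exists_lt_fib (x : ℕ) : ∃ m, x < Nat.fib m := ⟨x + 2, lt_fib_add_two x⟩

/-- The least index `m` with `x < fib m`. -/
def fIdx (x : ℕ) : ℕ := Nat.find (exists_lt_fib x)

lemma lt_fib_fIdx (x : ℕ) : x < Nat.fib (fIdx x) := Nat.find_spec (exists_lt_fib x)

lemma fib_le_of_lt_fIdx {x m : ℕ} (h : m < fIdx x) : Nat.fib m ≤ x := by
  have := Nat.find_min (exists_lt_fib x) h
  omega

lemma fIdx_eq {x m : ℕ} (h1 : Nat.fib m ≤ x) (h2 : x < Nat.fib (m + 1)) :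
    fIdx x = m + 1 := by
  have hle : fIdx x ≤ m + 1 := Nat.find_le h2
  have hgt : m < fIdx x := by
    by_contra hc
    have : Nat.fib (fIdx x) ≤ Nat.fib m := Nat.fib_mono (by omega)
    have := lt_fib_fIdx x
    omega
  omega

lemma four_le_fIdx {x : ℕ} (h : 2 ≤ x) : 4 ≤ fIdx x := by
  by_contra hc
  have h3 : Nat.fib (fIdx x) ≤ Nat.fib 3 := Nat.fib_mono (by omega)
  have h4 : Nat.fib 3 = 2 := rfl
  have := lt_fib_fIdx x
  omega

lemma fIdx_sub_lt {x : ℕ} (h : 2 ≤ x) : Nat.fib (fIdx x) - x < x := by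
  have h4 : 4 ≤ fIdx x := four_le_fIdx h
  obtain ⟨a, ha⟩ : ∃ a, fIdx x = a + 4 := ⟨fIdx x - 4, by omega⟩
  have hle : Nat.fib (a + 3) ≤ x := by
    have := fib_le_of_lt_fIdx (x := x) (m := a + 3) (by omega)
    exact this
  have hadd : Nat.fib (a + 4) = Nat.fib (a + 2) + Nat.fib (a + 3) := Nat.fib_add_two
  have hlt : Nat.fib (a + 2) < Nat.fib (a + 3) := Nat.fib_lt_fib_succ (by omega)
  have := lt_fib_fIdx x
  rw [ha] at *
  omega

/-- The 2-coloring: `fc x = ¬ fc (F - x)` where `F` is the least Fibonacci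
number exceeding `x`. -/
def fc (x : ℕ) : Bool :=
  if h : x ≤ 1 then false else !fc (Nat.fib (fIdx x) - x)
termination_by x
decreasing_by exact fIdx_sub_lt (by omega)

lemma fc_eq {x : ℕ} (h : 2 ≤ x) : fc x = !fc (Nat.fib (fIdx x) - x) := by
  rw [fc]
  simp [show ¬ x ≤ 1 by omega]

/-- Key lemma: endpoints of any edge get different colors. -/
lemma fc_key : ∀ j i k : ℕ, 1 ≤ i → i < j → i + j = Nat.fib k → fc i ≠ fc j := by
  intro j
  induction j using Nat.strong_induction_on with
  | _ j IH =>
  intro i k hi hij hsum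
  have hj2 : 2 ≤ j := by omega
  have hk4 : 4 ≤ k := by
    by_contra hc
    have h1 : Nat.fib k ≤ Nat.fib 3 := Nat.fib_mono (by omega)
    have h2 : Nat.fib 3 = 2 := rfl
    omega
  -- j < fib k
  have hjk : j < Nat.fib k := by omega
  have hMle : fIdx j ≤ k := Nat.find_le hjk
  have hMge : k - 1 ≤ fIdx j := by
    by_contra hc
    have h1 : Nat.fib (fIdx j) ≤ Nat.fib (k - 2) := Nat.fib_mono (by omega)
    have h2 : Nat.fib k = Nat.fib (k - 2) + Nat.fib (k - 1) := by
      obtain ⟨a, rfl⟩ : ∃ a, k = a + 2 := ⟨k - 2, by omega⟩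
      simpa using (Nat.fib_add_two (n := a))
    have h3 : Nat.fib (k - 2) ≤ Nat.fib (k - 1) := Nat.fib_mono (by omega)
    have := lt_fib_fIdx j
    omega
  rcases (by omega : fIdx j = k ∨ fIdx j = k - 1) with hM | hM
  · -- direct edge: fc j = ! fc i
    have := fc_eq hj2
    rw [hM] at this
    have hi' : Nat.fib k - j = i := by omega
    rw [hi'] at this
    rw [this]
    cases fc i <;> simp
  · -- j lies below fib (k-1)
    obtain ⟨a, rfl⟩ : ∃ a, k = a + 3 := ⟨k - 3, by omega⟩
    have hF1 : Nat.fib (a + 3) = Nat.fib (a + 1) + Nat.fib (a + 2) := Nat.fib_add_two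
    have hF2 : Nat.fib (a + 2) = Nat.fib a + Nat.fib (a + 1) := Nat.fib_add_two
    have hjlt : j < Nat.fib (a + 2) := by
      have := lt_fib_fIdx j; rw [hM] at this; simpa using this
    set j' : ℕ := Nat.fib (a + 2) - j with hj'
    have hj'1 : 1 ≤ j' := by omega
    have hieq : i = Nat.fib (a + 1) + j' := by omega
    have h2j' : 2 * j' < Nat.fib a := by omega
    have hfa1 : 1 ≤ Nat.fib (a + 1) := Nat.fib_pos.2 (by omega)
    have hi2 : 2 ≤ i := by omega
    -- fIdx i = a + 2
    have hIi : fIdx i = a + 2 := by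
      apply fIdx_eq (m := a + 1)
      · omega
      · show i < Nat.fib (a + 2)
        omega
    have hci : fc i = !fc (Nat.fib a - j') := by
      have := fc_eq hi2
      rw [hIi] at this
      have : fc i = !fc (Nat.fib (a + 2) - i) := this
      rw [this]
      congr 2
      omega
    have hcj : fc j = !fc j' := by
      have := fc_eq hj2
      rw [hM] at this
      simpa using this
    -- recurse on the pair (j', fib a - j')
    have hfafa1 : Nat.fib a + Nat.fib (a + 1) = Nat.fib (a + 2) := Nat.fib_add_two.symm
    have hblt : Nat.fib a - j' < j := by omega
    have hrec : fc j' ≠ fc (Nat.fib a - j') :=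
      IH (Nat.fib a - j') hblt j' a hj'1 (by omega) (by omega)
    rw [hci, hcj]
    revert hrec
    cases fc j' <;> cases fc (Nat.fib a - j') <;> simp

/-- For every positive integer n, the Fibonacci-sum graph G_n is bipartite
(equivalently, 2-colorable). -/
theorem fibSumGraph_bipartite (n : ℕ) (hn : 1 ≤ n) :
    (fibSumGraph n).Colorable 2 := by
  refine ⟨SimpleGraph.Coloring.mk (fun v => if fc v.val then 1 else 0) ?_⟩
  rintro x y ⟨hxy, m, hm⟩
  have hne : x.val ≠ y.val := fun h => hxy (Subtype.ext h)
  have hx1 := x.2.1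
  have hy1 := y.2.1
  have hkey : fc x.val ≠ fc y.val := by
    rcases lt_or_gt_of_ne hne with h | h
    · exact fc_key y.val x.val m hx1 h (by omega)
    · exact (fc_key x.val y.val m hy1 h (by omega)).symm
  cases hfx : fc x.val <;> cases hfy : fc y.val <;> simp_all
end

section
/- For every positive integer n, the Fibonacci-sum graph G_n is connected. -/
lemma fib_between (i : ℕ) (hi : 1 ≤ i) :
    ∃ m, 2 ≤ m ∧ Nat.fib m ≤ i ∧ i < Nat.fib (m + 1) := by
  induction i with
  | zero => omega
  | succ k ih =>
    rcases Nat.eq_or_lt_of_le hi with h | h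
    · have hf2 : Nat.fib 2 = 1 := rfl
      have hf3 : Nat.fib (2 + 1) = 2 := rfl
      exact ⟨2, le_refl 2, by omega, by omega⟩
    · obtain ⟨m, hm2, hle, hlt⟩ := ih (by omega)
      rcases Nat.lt_or_ge (k + 1) (Nat.fib (m + 1)) with h' | h'
      · exact ⟨m, hm2, by omega, h'⟩
      · refine ⟨m + 1, by omega, by omega, ?_⟩
        have : Nat.fib (m + 1 + 1) = Nat.fib m + Nat.fib (m + 1) := Nat.fib_add_two
        have h1 : 1 ≤ Nat.fib m := Nat.fib_pos.mpr (by omega)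
        omega

/-- For every positive integer n, the Fibonacci-sum graph G_n is connected. -/
theorem fibSumGraph_connected (n : ℕ) (hn : 1 ≤ n) :
    (fibSumGraph n).Connected := by
  have h1 : (1 : ℕ) ≥ 1 ∧ 1 ≤ n := ⟨le_refl 1, hn⟩
  have key : ∀ i (h : 1 ≤ i ∧ i ≤ n),
      (fibSumGraph n).Reachable ⟨1, h1⟩ ⟨i, h⟩ := by
    intro i
    induction i using Nat.strong_induction_on with
    | _ i ih =>
      intro h
      rcases Nat.eq_or_lt_of_le h.1 with h1' | h2
      · have : (⟨1, h1⟩ : FibVert n) = ⟨i, h⟩ := by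
          simp [← h1']
        rw [this]
      · -- i ≥ 2
        obtain ⟨m, hm2, hle, hlt⟩ := fib_between i h.1
        -- m ≥ 3 since fib (m+1) > i ≥ 2
        have hm3 : 3 ≤ m := by
          by_contra hc
          interval_cases m <;> simp [Nat.fib] at hlt <;> omega
        set j := Nat.fib (m + 1) - i with hj
        have hfib : Nat.fib (m + 1) = Nat.fib m + Nat.fib (m - 1) := by
          have := Nat.fib_add_two (n := m - 1)
          have h1 : m - 1 + 2 = m + 1 := by omega
          have h2 : m - 1 + 1 = m := by omega
          rw [h1, h2] at this
          omega
        have hlt' : Nat.fib (m - 1) < Nat.fib m :=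
          Nat.fib_lt_fib_succ (by omega) |>.trans_eq (by congr 1; omega)
        have hjlt : j < i := by omega
        have hj1 : 1 ≤ j := by omega
        have hjn : j ≤ n := by omega
        have hreach := ih j hjlt ⟨hj1, hjn⟩
        have hadj : (fibSumGraph n).Adj ⟨j, hj1, hjn⟩ ⟨i, h⟩ := by
          refine ⟨?_, m + 1, show Nat.fib (m + 1) = j + i by omega⟩
          intro hc
          have : j = i := congrArg Subtype.val hc
          omega
        exact hreach.trans hadj.reachable
  have : Nonempty (FibVert n) := ⟨⟨1, h1⟩⟩
  refine SimpleGraph.Connected.mk fun x y => ?_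
  exact (key x.val ⟨x.2.1, x.2.2⟩).symm.trans (key y.val ⟨y.2.1, y.2.2⟩)
end

section
/- Let n ≥ 2 and let k be such that F_k ≤ n < F_{k+1}. In the Fibonacci-sum graph G_n, if n ≤ F_{k+2}/2 then the vertex n is adjacent to exactly one vertex, namely F_{k+1} − n; and if n > F_{k+2}/2 then the vertex n is adjacent to exactly two vertices, namely F_{k+1} − n and F_{k+2} − n. -/
/-- Let n ≥ 2 and F_k ≤ n < F_{k+1}.  If n ≤ F_{k+2}/2 then in G_n the vertex n is
adjacent to exactly one vertex, namely F_{k+1} - n; if n > F_{k+2}/2 then it is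
adjacent to exactly two vertices, namely F_{k+1} - n and F_{k+2} - n. -/
theorem fibSumGraph_last_vertex_nbrs (n k : ℕ) (hn : 2 ≤ n)
    (h1 : Nat.fib k ≤ n) (h2 : n < Nat.fib (k + 1)) :
    (2 * n ≤ Nat.fib (k + 2) →
      (∃ y : FibVert n, y.val = Nat.fib (k + 1) - n) ∧
      ∀ y : FibVert n,
        (fibSumGraph n).Adj ⟨n, by omega⟩ y ↔ y.val = Nat.fib (k + 1) - n) ∧
    (Nat.fib (k + 2) < 2 * n →
      (∃ y : FibVert n, y.val = Nat.fib (k + 1) - n) ∧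
      (∃ y : FibVert n, y.val = Nat.fib (k + 2) - n) ∧
      ∀ y : FibVert n,
        (fibSumGraph n).Adj ⟨n, by omega⟩ y ↔
          (y.val = Nat.fib (k + 1) - n ∨ y.val = Nat.fib (k + 2) - n)) := by
  have hk3 : 3 ≤ k := by
    by_contra h
    have h' : Nat.fib (k + 1) ≤ Nat.fib 3 := Nat.fib_mono (by omega)
    have h3 : Nat.fib 3 = 2 := rfl
    omega
  obtain ⟨j, rfl⟩ : ∃ j, k = j + 3 := ⟨k - 3, by omega⟩
  simp only [show j + 3 + 1 = j + 4 by omega, show j + 3 + 2 = j + 5 by omega] at h2 ⊢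
  have e4 : Nat.fib (j + 4) = Nat.fib (j + 2) + Nat.fib (j + 3) := by
    have := Nat.fib_add_two (n := j + 2)
    simpa [show j + 2 + 2 = j + 4 by omega, show j + 2 + 1 = j + 3 by omega] using this
  have e5 : Nat.fib (j + 5) = Nat.fib (j + 3) + Nat.fib (j + 4) := by
    have := Nat.fib_add_two (n := j + 3)
    simpa [show j + 3 + 2 = j + 5 by omega, show j + 3 + 1 = j + 4 by omega] using this
  have e6 : Nat.fib (j + 6) = Nat.fib (j + 4) + Nat.fib (j + 5) := by
    have := Nat.fib_add_two (n := j + 4)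
    simpa [show j + 4 + 2 = j + 6 by omega, show j + 4 + 1 = j + 5 by omega] using this
  have hs : Nat.fib (j + 2) < Nat.fib (j + 3) := by
    have := Nat.fib_lt_fib_succ (n := j + 2) (by omega)
    simpa [show j + 2 + 1 = j + 3 by omega] using this
  have h1' : Nat.fib (j + 3) ≤ n := h1
  have h2' : n < Nat.fib (j + 4) := h2
  have hA : Nat.fib (j + 4) < 2 * n := by omega
  have hB : 2 * n < Nat.fib (j + 6) := by omega
  -- forward direction: any neighbor of n has value fib(j+4)-n or fib(j+5)-n
  have fwd : ∀ y : FibVert n, (fibSumGraph n).Adj ⟨n, by omega⟩ y →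
      (y.val = Nat.fib (j + 4) - n ∨ y.val = Nat.fib (j + 5) - n) := by
    rintro ⟨y, hy1, hy2⟩ ⟨hne, m, hm⟩
    have hyne : y ≠ n := by
      intro h; exact hne (by simp [Subtype.ext_iff, h])
    simp only at hm
    have hm2 : j + 3 < m := by
      by_contra h
      have := Nat.fib_mono (show m ≤ j + 3 by omega)
      omega
    have hm1 : m < j + 6 := by
      by_contra h
      have := Nat.fib_mono (show j + 6 ≤ m by omega)
      omega
    rcases (show m = j + 4 ∨ m = j + 5 by omega) with h | h <;> subst h
    · left; show y = Nat.fib (j + 4) - n; omega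
    · right; show y = Nat.fib (j + 5) - n; omega
  -- backward: fib(j+4)-n is a neighbor
  have bwd4 : ∀ y : FibVert n, y.val = Nat.fib (j + 4) - n →
      (fibSumGraph n).Adj ⟨n, by omega⟩ y := by
    intro y hy
    have hy1 := y.2.1
    have hy2 := y.2.2
    refine ⟨?_, j + 4, ?_⟩
    · intro h
      have h' : n = y.val := congrArg Subtype.val h
      omega
    · show Nat.fib (j + 4) = n + y.val
      omega
  have bwd5 : Nat.fib (j + 5) < 2 * n → ∀ y : FibVert n, y.val = Nat.fib (j + 5) - n →
      (fibSumGraph n).Adj ⟨n, by omega⟩ y := by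
    intro hc y hy
    have hy1 := y.2.1
    have hy2 := y.2.2
    refine ⟨?_, j + 5, ?_⟩
    · intro h
      have h' : n = y.val := congrArg Subtype.val h
      omega
    · show Nat.fib (j + 5) = n + y.val
      omega
  constructor
  · intro hcase
    refine ⟨⟨⟨Nat.fib (j + 4) - n, by omega, by omega⟩, rfl⟩, fun y => ⟨?_, fun hy => bwd4 y hy⟩⟩
    intro hadj
    rcases fwd y hadj with h | h
    · exact h
    · exfalso
      obtain ⟨hne, -⟩ := hadj
      have hyne : y.val ≠ n := by
        intro hh; exact hne (Subtype.ext (by simp [hh]))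
      have := y.2
      omega
  · intro hcase
    refine ⟨⟨⟨Nat.fib (j + 4) - n, by omega, by omega⟩, rfl⟩,
      ⟨⟨Nat.fib (j + 5) - n, by omega, by omega⟩, rfl⟩,
      fun y => ⟨fwd y, ?_⟩⟩
    rintro (h | h)
    · exact bwd4 y h
    · exact bwd5 hcase y h
end

section
/- Let n ≥ 2 and let k be such that F_k ≤ n < F_{k+1}. Then in the Fibonacci-sum graph G_n, the vertex F_k is adjacent to exactly one vertex, namely F_{k-1}. -/
/-- Let n ≥ 2 and F_k ≤ n < F_{k+1}.  Then in G_n the vertex F_k is adjacent to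
exactly one vertex, namely F_{k-1}. -/
theorem fibSumGraph_pendant_fib (n k : ℕ) (hn : 2 ≤ n)
    (h1 : Nat.fib k ≤ n) (h2 : n < Nat.fib (k + 1))
    (x : FibVert n) (hx : x.val = Nat.fib k) :
    (∃ y : FibVert n, y.val = Nat.fib (k - 1)) ∧
    ∀ y : FibVert n, (fibSumGraph n).Adj x y ↔ y.val = Nat.fib (k - 1) := by
  have hk3 : 3 ≤ k := by
    by_contra h
    push_neg at h
    have : Nat.fib (k + 1) ≤ Nat.fib 3 := Nat.fib_mono (by omega)
    have h3 : Nat.fib 3 = 2 := rfl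
    omega
  have hkk : Nat.fib (k - 1) < Nat.fib k := by
    have h := Nat.fib_lt_fib_succ (n := k - 1) (by omega)
    have hk1 : k - 1 + 1 = k := by omega
    rwa [hk1] at h
  have hadd : Nat.fib (k + 1) = Nat.fib (k - 1) + Nat.fib k := by
    have h := Nat.fib_add_two (n := k - 1)
    have e2 : k - 1 + 2 = k + 1 := by omega
    have e1 : k - 1 + 1 = k := by omega
    rw [e2, e1] at h
    exact h
  have hfpos : 1 ≤ Nat.fib (k - 1) := Nat.fib_pos.mpr (by omega)
  constructor
  · exact ⟨⟨Nat.fib (k - 1), hfpos, le_trans hkk.le h1⟩, rfl⟩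
  · intro y
    constructor
    · rintro ⟨hne, m, hm⟩
      have hy1 := y.prop.1
      have hyn := y.prop.2
      have hmgt : Nat.fib k < Nat.fib m := by omega
      have hm1 : k + 1 ≤ m := by
        by_contra h
        push_neg at h
        have := Nat.fib_mono (show m ≤ k by omega)
        omega
      have hub : Nat.fib m < Nat.fib (k + 2) := by
        have h := Nat.fib_add_two (n := k)
        omega
      have hm2 : m < k + 2 := by
        by_contra h
        push_neg at h
        have := Nat.fib_mono h
        omega
      have hmk : m = k + 1 := by omega
      subst hmk
      omega
    · intro hy
      refine ⟨?_, k + 1, by omega⟩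
      intro h
      have := congrArg Subtype.val h
      omega
end

section
/- Let n ≥ 1 and let x ∈ {1, ..., n}. Let k ≥ 2 satisfy F_k ≤ x < F_{k+1} and let ℓ ≥ k satisfy F_ℓ ≤ x + n < F_{ℓ+1}. Then the degree of x in the Fibonacci-sum graph G_n equals ℓ − k if 2x is not a Fibonacci number, and equals ℓ − k − 1 if 2x is a Fibonacci number. -/
private lemma fib_lt_fib_of_lt {a b : ℕ} (ha : 2 ≤ a) (hab : a < b) :
    Nat.fib a < Nat.fib b :=
  lt_of_lt_of_le (Nat.fib_lt_fib_succ ha) (Nat.fib_mono hab)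

private lemma fib_inj {a b : ℕ} (ha : 2 ≤ a) (hb : 2 ≤ b)
    (h : Nat.fib a = Nat.fib b) : a = b := by
  rcases lt_trichotomy a b with h' | h' | h'
  · exact absurd h (fib_lt_fib_of_lt ha h').ne
  · exact h'
  · exact absurd h.symm (fib_lt_fib_of_lt hb h').ne

private lemma fib_small {m : ℕ} (h : m ≤ 2) : Nat.fib m ≤ 1 := by
  interval_cases m <;> simp

/-- Degree formula for a vertex x of G_n: with F_k ≤ x < F_{k+1} (k ≥ 2) and
F_ℓ ≤ x + n < F_{ℓ+1} (ℓ ≥ k), the degree of x is ℓ - k if 2x is not a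
Fibonacci number, and ℓ - k - 1 if 2x is a Fibonacci number. -/
theorem fibSumGraph_degree_formula (n : ℕ) (hn : 1 ≤ n) (x : FibVert n)
    (k l : ℕ) (hk : 2 ≤ k) (hkl : k ≤ l)
    (hx1 : Nat.fib k ≤ x.val) (hx2 : x.val < Nat.fib (k + 1))
    (hl1 : Nat.fib l ≤ x.val + n) (hl2 : x.val + n < Nat.fib (l + 1)) :
    ((∃ m, Nat.fib m = 2 * x.val) →
      ((fibSumGraph n).neighborSet x).ncard = l - k - 1) ∧
    (¬ (∃ m, Nat.fib m = 2 * x.val) →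
      ((fibSumGraph n).neighborSet x).ncard = l - k) := by
  have hX1 : 1 ≤ x.val := x.2.1
  have hXn : x.val ≤ n := x.2.2
  set X := x.val with hXdef
  set S : Finset ℕ := (Finset.Icc (k+1) l).filter (fun m => Nat.fib m ≠ 2*X) with hS
  have hmemS : ∀ m, m ∈ S ↔ (k+1 ≤ m ∧ m ≤ l ∧ Nat.fib m ≠ 2*X) := by
    intro m
    simp [hS, Finset.mem_filter, Finset.mem_Icc, and_assoc]
  -- bounds helper
  have hgt : ∀ m, k+1 ≤ m → X < Nat.fib m := fun m hm =>
    lt_of_lt_of_le hx2 (Nat.fib_mono hm)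
  have hle : ∀ m, m ≤ l → Nat.fib m ≤ X + n := fun m hm =>
    le_trans (Nat.fib_mono hm) hl1
  have himg : Subtype.val '' ((fibSumGraph n).neighborSet x) =
      (fun m => Nat.fib m - X) '' (S : Set ℕ) := by
    ext y
    constructor
    · rintro ⟨z, hz, rfl⟩
      obtain ⟨hne, m, hm⟩ := hz
      have hz1 : 1 ≤ z.val := z.2.1
      have hz2 : z.val ≤ n := z.2.2
      have hzx : z.val ≠ X := by
        intro h
        exact hne (Subtype.ext (by omega))
      have hmk : k + 1 ≤ m := by
        by_contra h
        have : Nat.fib m ≤ Nat.fib k := Nat.fib_mono (by omega)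
        omega
      have hml : m ≤ l := by
        by_contra h
        have : Nat.fib (l+1) ≤ Nat.fib m := Nat.fib_mono (by omega)
        omega
      refine ⟨m, ?_, ?_⟩
      · rw [Finset.mem_coe, hmemS]
        exact ⟨hmk, hml, by omega⟩
      · simp only
        omega
    · rintro ⟨m, hm, rfl⟩
      rw [Finset.mem_coe, hmemS] at hm
      obtain ⟨hmk, hml, hm2x⟩ := hm
      have h1 := hgt m hmk
      have h2 := hle m hml
      refine ⟨⟨Nat.fib m - X, by omega, by omega⟩, ?_, rfl⟩
      refine ⟨?_, m, by simp only; omega⟩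
      intro h
      have := congrArg Subtype.val h
      simp only at this
      omega
  have hinj : Set.InjOn (fun m => Nat.fib m - X) (S : Set ℕ) := by
    intro a ha b hb hab
    rw [Finset.mem_coe, hmemS] at ha hb
    have h1 := hgt a ha.1
    have h2 := hgt b hb.1
    simp only at hab
    exact fib_inj (by omega) (by omega) (by omega)
  have hcard : ((fibSumGraph n).neighborSet x).ncard = S.card := by
    calc ((fibSumGraph n).neighborSet x).ncard
        = (Subtype.val '' ((fibSumGraph n).neighborSet x)).ncard :=
          (Set.ncard_image_of_injective _ Subtype.val_injective).symm
      _ = ((fun m => Nat.fib m - X) '' (S : Set ℕ)).ncard := by rw [himg]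
      _ = (S : Set ℕ).ncard := Set.ncard_image_of_injOn hinj
      _ = S.card := Set.ncard_coe_finset S
  constructor
  · rintro ⟨m0, hm0⟩
    have hm0k : k + 1 ≤ m0 := by
      by_contra h
      have : Nat.fib m0 ≤ Nat.fib k := Nat.fib_mono (by omega)
      omega
    have hm0l : m0 ≤ l := by
      by_contra h
      have : Nat.fib (l+1) ≤ Nat.fib m0 := Nat.fib_mono (by omega)
      omega
    have hm0mem : m0 ∈ Finset.Icc (k+1) l := Finset.mem_Icc.mpr ⟨hm0k, hm0l⟩
    have hSE : S = (Finset.Icc (k+1) l).erase m0 := by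
      ext m
      rw [hmemS, Finset.mem_erase, Finset.mem_Icc]
      constructor
      · rintro ⟨h1, h2, h3⟩
        refine ⟨?_, h1, h2⟩
        intro h
        subst h
        omega
      · rintro ⟨hne, h1, h2⟩
        refine ⟨h1, h2, ?_⟩
        intro h
        exact hne (fib_inj (by omega) (by omega) (by omega))
    rw [hcard, hSE, Finset.card_erase_of_mem hm0mem, Nat.card_Icc]
    omega
  · intro hno
    have hSE : S = Finset.Icc (k+1) l := by
      rw [hS]
      apply Finset.filter_true_of_mem
      intro m _ h
      exact hno ⟨m, h⟩
    rw [hcard, hSE, Nat.card_Icc]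
    omega
end

section
/- For every positive integer p there exists a positive integer n such that the Fibonacci-sum graph G_n has exactly p vertices of degree 1; in fact, for n = F_{6p+1} + p − 1, the vertices of degree 1 in G_n are exactly F_{6p+1}, F_{6p+1} + 1, ..., F_{6p+1} + p − 1. -/
/-- Parity of Fibonacci numbers with period 3. -/
lemma fib_mod_two (k : ℕ) :
    Nat.fib (3 * k) % 2 = 0 ∧ Nat.fib (3 * k + 1) % 2 = 1 ∧
      Nat.fib (3 * k + 2) % 2 = 1 := by
  induction k with
  | zero => decide
  | succ k ih =>
    have h1 : Nat.fib (3 * k + 2) = Nat.fib (3 * k) + Nat.fib (3 * k + 1) :=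
      Nat.fib_add_two
    have h2 : Nat.fib (3 * k + 3) = Nat.fib (3 * k + 1) + Nat.fib (3 * k + 2) :=
      Nat.fib_add_two
    have h3 : Nat.fib (3 * k + 4) = Nat.fib (3 * k + 2) + Nat.fib (3 * k + 3) :=
      Nat.fib_add_two
    have h4 : Nat.fib (3 * k + 4 + 1) = Nat.fib (3 * k + 3) + Nat.fib (3 * k + 4) :=
      Nat.fib_add_two
    show Nat.fib (3 * k + 3) % 2 = 0 ∧ Nat.fib (3 * k + 4) % 2 = 1 ∧
      Nat.fib (3 * k + 4 + 1) % 2 = 1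
    omega

/-- If a Fibonacci number is even, its index is divisible by 3. -/
lemma fib_even_index (m : ℕ) (h : Nat.fib m % 2 = 0) : m % 3 = 0 := by
  by_contra hm
  obtain ⟨h0, h1, h2⟩ := fib_mod_two (m / 3)
  have hm3 : 3 * (m / 3) + m % 3 = m := by omega
  have hr : m % 3 = 1 ∨ m % 3 = 2 := by omega
  rcases hr with hr | hr
  · rw [hr] at hm3; rw [← hm3] at h; omega
  · rw [hr] at hm3; rw [← hm3] at h; omega

/-- For every p ≥ 1 there is an n with exactly p pendant vertices in G_n:
for n = F_{6p+1} + p - 1 the degree-1 vertices of G_n are exactly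
F_{6p+1}, F_{6p+1} + 1, ..., F_{6p+1} + p - 1. -/
theorem fibSumGraph_exactly_p_pendants (p : ℕ) (hp : 1 ≤ p) :
    ∃ n : ℕ, n = Nat.fib (6 * p + 1) + p - 1 ∧
      {x : FibVert n |
        ((fibSumGraph n).neighborSet x).ncard = 1}.ncard = p ∧
      ∀ x : FibVert n,
        ((fibSumGraph n).neighborSet x).ncard = 1 ↔
          Nat.fib (6 * p + 1) ≤ x.val := by
  set F := Nat.fib (6 * p + 1) with hFdef
  set n := F + p - 1 with hndef
  -- basic numeric facts
  have hF0big : 6 * p ≤ Nat.fib (6 * p) := Nat.le_fib_self (by omega)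
  have hF01 : Nat.fib (6 * p) < F := Nat.fib_lt_fib_succ (by omega)
  have hF2 : Nat.fib (6 * p + 2) = Nat.fib (6 * p) + F := Nat.fib_add_two
  have hF3 : Nat.fib (6 * p + 3) = F + Nat.fib (6 * p + 2) := Nat.fib_add_two
  have hFn : F ≤ n := by omega
  have key : ∀ x : FibVert n,
      ((fibSumGraph n).neighborSet x).ncard = 1 ↔ F ≤ x.val := by
    intro x
    have hi1 : 1 ≤ x.val := x.2.1
    have hi2 : x.val ≤ n := x.2.2
    constructor
    · -- hard direction: degree 1 → x.val ≥ F, by contradiction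
      intro hcard
      by_contra hx
      push_neg at hx
      obtain ⟨a, ha⟩ := Set.ncard_eq_one.mp hcard
      -- helper: two distinct neighbors give a contradiction
      have two_nbrs : ∀ (j₁ j₂ : ℕ) (h₁ : 1 ≤ j₁ ∧ j₁ ≤ n) (h₂ : 1 ≤ j₂ ∧ j₂ ≤ n),
          j₁ ≠ j₂ → j₁ ≠ x.val → j₂ ≠ x.val →
          (∃ m, Nat.fib m = x.val + j₁) → (∃ m, Nat.fib m = x.val + j₂) → False := by
        intro j₁ j₂ h₁ h₂ hne hne1 hne2 hf1 hf2
        have m1 : (⟨j₁, h₁⟩ : FibVert n) ∈ (fibSumGraph n).neighborSet x := by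
          refine ⟨?_, hf1⟩
          intro h
          exact hne1 ((congrArg Subtype.val h).symm : j₁ = x.val)
        have m2 : (⟨j₂, h₂⟩ : FibVert n) ∈ (fibSumGraph n).neighborSet x := by
          refine ⟨?_, hf2⟩
          intro h
          exact hne2 ((congrArg Subtype.val h).symm : j₂ = x.val)
        rw [ha] at m1 m2
        simp only [Set.mem_singleton_iff] at m1 m2
        have : (⟨j₁, h₁⟩ : FibVert n) = ⟨j₂, h₂⟩ := m1.trans m2.symm
        exact hne (congrArg Subtype.val this : j₁ = j₂)
      rcases Nat.lt_or_ge x.val 2 with hi | hi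
      · -- x.val = 1 : neighbors 2 and 4
        have hi' : x.val = 1 := by omega
        have h13 : 13 ≤ F := by
          have h7 := Nat.fib_mono (show 7 ≤ 6 * p + 1 by omega)
          have : Nat.fib 7 = 13 := by decide
          omega
        have e3 : Nat.fib 4 = 3 := by decide
        have e5 : Nat.fib 5 = 5 := by decide
        exact two_nbrs 2 4 ⟨by omega, by omega⟩ ⟨by omega, by omega⟩
          (by omega) (by omega) (by omega) ⟨4, by omega⟩ ⟨5, by omega⟩
      · -- x.val ≥ 2
        obtain ⟨k, hk2, hkub, hkle, hk1⟩ :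
            ∃ k, 2 ≤ k ∧ k ≤ 6 * p ∧ Nat.fib k ≤ x.val ∧ x.val < Nat.fib (k + 1) := by
          have hP2 : Nat.fib 2 ≤ x.val := by rw [Nat.fib_two]; omega
          refine ⟨Nat.findGreatest (fun m => Nat.fib m ≤ x.val) (6 * p), ?_, ?_, ?_, ?_⟩
          · exact Nat.le_findGreatest (P := fun m => Nat.fib m ≤ x.val) (m := 2) (show 2 ≤ 6 * p by omega) hP2
          · exact Nat.findGreatest_le _
          · exact Nat.findGreatest_spec (P := fun m => Nat.fib m ≤ x.val) (m := 2) (show 2 ≤ 6 * p by omega) hP2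
          · rcases Nat.lt_or_ge (Nat.findGreatest (fun m => Nat.fib m ≤ x.val) (6 * p))
              (6 * p) with h | h
            · have := Nat.findGreatest_is_greatest
                (P := fun m => Nat.fib m ≤ x.val) (n := 6 * p)
                (k := Nat.findGreatest (fun m => Nat.fib m ≤ x.val) (6 * p) + 1)
                (by omega) (by omega)
              exact Nat.lt_of_not_le this
            · have hk6 : Nat.findGreatest (fun m => Nat.fib m ≤ x.val) (6 * p) = 6 * p := by
                have := Nat.findGreatest_le (n := 6 * p) (P := fun m => Nat.fib m ≤ x.val)
                omega
              rw [hk6]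
              omega
        have hfib1 : Nat.fib (k + 1) ≤ F := Nat.fib_mono (by omega)
        have hrec1 : Nat.fib (k + 2) = Nat.fib k + Nat.fib (k + 1) := Nat.fib_add_two
        have hrec2 : Nat.fib (k + 3) = Nat.fib (k + 1) + Nat.fib (k + 2) := Nat.fib_add_two
        have hmono12 : Nat.fib (k + 1) < Nat.fib (k + 2) :=
          Nat.fib_lt_fib_succ (by omega)
        have hmono23 : Nat.fib (k + 2) < Nat.fib (k + 3) :=
          Nat.fib_lt_fib_succ (by omega)
        -- fib (k+1) ≠ 2 * x.val
        have h2i1 : Nat.fib (k + 1) ≠ 2 * x.val := by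
          intro h
          obtain ⟨k', rfl⟩ : ∃ k', k = k' + 2 := ⟨k - 2, by omega⟩
          have e1 : Nat.fib (k' + 3) = Nat.fib (k' + 1) + Nat.fib (k' + 2) :=
            Nat.fib_add_two
          have e2 : Nat.fib (k' + 2) = Nat.fib k' + Nat.fib (k' + 1) :=
            Nat.fib_add_two
          have hmle : Nat.fib (k' + 1) ≤ Nat.fib (k' + 2) := Nat.fib_mono (by omega)
          have h' : Nat.fib (k' + 3) = 2 * x.val := h
          have hk1' : x.val < Nat.fib (k' + 3) := hk1
          have hk'0 : Nat.fib k' = 0 := by omega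
          have hk'00 : k' = 0 := Nat.fib_eq_zero.mp hk'0
          subst hk'00
          have f1 : Nat.fib (0 + 1) = 1 := Nat.fib_one
          have f2 : Nat.fib (0 + 2) = 1 := Nat.fib_two
          omega
        by_cases hB : Nat.fib (k + 2) = 2 * x.val
        · -- use fib (k+1) - x.val and fib (k+3) - x.val
          have heven : (k + 2) % 3 = 0 := fib_even_index _ (by omega)
          have hk6 : k + 2 ≤ 6 * p := by omega
          have hb1 : Nat.fib (k + 1) ≤ Nat.fib (6 * p - 1) := Nat.fib_mono (by omega)
          have hb2 : Nat.fib (k + 2) ≤ Nat.fib (6 * p) := Nat.fib_mono (by omega)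
          have hFsplit : F = Nat.fib (6 * p - 1) + Nat.fib (6 * p) := by
            have h' : Nat.fib (6 * p - 1 + 2) =
                Nat.fib (6 * p - 1) + Nat.fib (6 * p - 1 + 1) := Nat.fib_add_two
            have e : 6 * p - 1 + 2 = 6 * p + 1 := by omega
            have e' : 6 * p - 1 + 1 = 6 * p := by omega
            rw [e, e'] at h'
            omega
          have hpos : 0 < Nat.fib (k + 1) := Nat.fib_pos.mpr (by omega)
          exact two_nbrs (Nat.fib (k + 1) - x.val) (Nat.fib (k + 3) - x.val)
            ⟨by omega, by omega⟩ ⟨by omega, by omega⟩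
            (by omega) (by omega) (by omega)
            ⟨k + 1, by omega⟩ ⟨k + 3, by omega⟩
        · -- use fib (k+1) - x.val and fib (k+2) - x.val
          exact two_nbrs (Nat.fib (k + 1) - x.val) (Nat.fib (k + 2) - x.val)
            ⟨by omega, by omega⟩ ⟨by omega, by omega⟩
            (by omega) (by omega) (by omega)
            ⟨k + 1, by omega⟩ ⟨k + 2, by omega⟩
    · -- easy direction: x.val ≥ F → neighbor set is a singleton
      intro hx
      have hy0 : 1 ≤ Nat.fib (6 * p + 2) - x.val ∧ Nat.fib (6 * p + 2) - x.val ≤ n := by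
        omega
      have hset : (fibSumGraph n).neighborSet x =
          {⟨Nat.fib (6 * p + 2) - x.val, hy0⟩} := by
        ext y
        simp only [SimpleGraph.mem_neighborSet, Set.mem_singleton_iff]
        constructor
        · rintro ⟨hne, m, hm⟩
          have hyval1 : 1 ≤ y.val := y.2.1
          have hyval2 : y.val ≤ n := y.2.2
          have hm2 : 6 * p + 2 ≤ m := by
            by_contra h
            have := Nat.fib_mono (show m ≤ 6 * p + 1 by omega)
            omega
          have hm3 : m ≤ 6 * p + 2 := by
            by_contra h
            have := Nat.fib_mono (show 6 * p + 3 ≤ m by omega)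
            omega
          have hm4 : m = 6 * p + 2 := by omega
          subst hm4
          exact Subtype.ext (show y.val = Nat.fib (6 * p + 2) - x.val by omega)
        · rintro rfl
          refine ⟨?_, 6 * p + 2, ?_⟩
          · intro h
            have h' : x.val = Nat.fib (6 * p + 2) - x.val := congrArg Subtype.val h
            omega
          · show Nat.fib (6 * p + 2) = x.val + (Nat.fib (6 * p + 2) - x.val)
            omega
      rw [hset]
      exact Set.ncard_singleton _
  refine ⟨n, rfl, ?_, key⟩
  have hsets : {x : FibVert n | ((fibSumGraph n).neighborSet x).ncard = 1} =
      {x : FibVert n | F ≤ x.val} := by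
    ext x; exact key x
  rw [hsets]
  have himg : Subtype.val '' {x : FibVert n | F ≤ x.val} = Set.Icc F n := by
    ext m
    simp only [Set.mem_image, Set.mem_setOf_eq, Set.mem_Icc]
    constructor
    · rintro ⟨x, hx, rfl⟩
      exact ⟨hx, x.2.2⟩
    · rintro ⟨h1, h2⟩
      exact ⟨⟨m, by omega, h2⟩, h1, rfl⟩
  calc {x : FibVert n | F ≤ x.val}.ncard
      = (Subtype.val '' {x : FibVert n | F ≤ x.val}).ncard :=
        (Set.ncard_image_of_injective _ Subtype.val_injective).symm
    _ = (Set.Icc F n).ncard := by rw [himg]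
    _ = p := by
        rw [← Finset.coe_Icc, Set.ncard_coe_finset, Nat.card_Icc]
        omega
end

section
/- Let n ≥ 1 and let c : {1, ..., n} → {0, 1} be a proper 2-coloring of the Fibonacci-sum graph G_n (adjacent vertices receive different colors) with c(1) = 1. Then for every k ≥ 1: if F_{2k} ≤ n then c(F_{2k}) = 1; if F_{2k+1} ≤ n then c(F_{2k+1}) = 0; if F_{6k−3}/2 ≤ n then c(F_{6k−3}/2) = 1; and if F_{6k}/2 ≤ n then c(F_{6k}/2) = 0. -/
/-- Colors of Fibonacci numbers and of halves of even-indexed Fibonacci numbers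
in any proper 2-coloring c of G_n with c(1) = 1. -/
theorem fibSumGraph_coloring_fib_values (n : ℕ) (hn : 1 ≤ n)
    (c : FibVert n → Fin 2)
    (hc : ∀ x y : FibVert n, (fibSumGraph n).Adj x y → c x ≠ c y)
    (h1 : c ⟨1, by omega⟩ = 1) :
    ∀ k : ℕ, 1 ≤ k → ∀ x : FibVert n,
      (x.val = Nat.fib (2 * k) → c x = 1) ∧
      (x.val = Nat.fib (2 * k + 1) → c x = 0) ∧
      (2 * x.val = Nat.fib (6 * k - 3) → c x = 1) ∧
      (2 * x.val = Nat.fib (6 * k) → c x = 0) := by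
  have key : ∀ a b : Fin 2, a ≠ b → (b = 0 → a = 1) ∧ (b = 1 → a = 0) := by decide
  -- Lemma A: colors of Fibonacci numbers
  have lemA : ∀ m, 2 ≤ m → ∀ x : FibVert n, x.val = Nat.fib m →
      c x = if m % 2 = 0 then 1 else 0 := by
    intro m
    induction m with
    | zero => omega
    | succ m ih =>
      intro hm x hx
      rcases Nat.lt_or_ge m 2 with h2 | h2
      · have hm1 : m = 1 := by omega
        subst hm1
        have hx1 : x = ⟨1, by omega⟩ := Subtype.ext (show x.val = 1 by simpa using hx)
        rw [hx1, h1]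
        norm_num
      · -- m ≥ 2 : previous Fibonacci number is a vertex
        have hfibpos : 1 ≤ Nat.fib m := Nat.fib_pos.mpr (by omega)
        have hmono : Nat.fib m ≤ Nat.fib (m + 1) := Nat.fib_le_fib_succ
        have hlt : Nat.fib m < Nat.fib (m + 1) := Nat.fib_lt_fib_succ h2
        have hyn : Nat.fib m ≤ n := le_trans hmono (hx ▸ x.2.2)
        let y : FibVert n := ⟨Nat.fib m, hfibpos, hyn⟩
        have hyval : y.val = Nat.fib m := rfl
        have hadj : (fibSumGraph n).Adj x y := by
          refine ⟨?_, m + 2, by rw [Nat.fib_add_two]; omega⟩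
          intro h
          rw [h, hyval] at hx
          omega
        have hne := hc x y hadj
        have hcy := ih h2 y hyval
        rcases Nat.even_or_odd m with he | ho
        · have h0 : m % 2 = 0 := Nat.even_iff.mp he
          rw [show (m + 1) % 2 = 1 by omega]
          simp only [h0, if_pos rfl] at hcy
          simpa using (key _ _ hne).2 hcy
        · have h0 : m % 2 = 1 := Nat.odd_iff.mp ho
          rw [show (m + 1) % 2 = 0 by omega]
          simp only [h0] at hcy
          simp only [if_pos rfl]
          exact (key _ _ hne).1 (by simpa using hcy)
  -- Lemma B: colors of halves of fib (3*j)
  have lemB : ∀ j, 1 ≤ j → ∀ x : FibVert n, 2 * x.val = Nat.fib (3 * j) →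
      c x = if j % 2 = 1 then 1 else 0 := by
    intro j
    induction j with
    | zero => omega
    | succ j ih =>
      intro hj x hx
      rcases Nat.lt_or_ge j 1 with h1j | h1j
      · have hj0 : j = 0 := by omega
        subst hj0
        have h2 : 2 * x.val = 2 := by simpa [Nat.fib] using hx
        have hx1 : x = ⟨1, by omega⟩ := Subtype.ext (show x.val = 1 by omega)
        rw [hx1, h1]
        norm_num
      · -- j ≥ 1
        have hdvd : Nat.fib 3 ∣ Nat.fib (3 * j) := Nat.fib_dvd 3 (3 * j) ⟨j, rfl⟩
        have hf3 : Nat.fib 3 = 2 := rfl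
        obtain ⟨t, ht⟩ : ∃ t, Nat.fib (3 * j) = 2 * t := by
          rw [hf3] at hdvd; exact hdvd
        have hpos : 1 ≤ Nat.fib (3 * j) := Nat.fib_pos.mpr (by omega)
        have htpos : 1 ≤ t := by omega
        have h33 : 3 * (j + 1) = 3 * j + 3 := by ring
        rw [h33] at hx
        have hrec1 : Nat.fib (3 * j + 2) = Nat.fib (3 * j) + Nat.fib (3 * j + 1) :=
          Nat.fib_add_two
        have hrec2 : Nat.fib (3 * j + 3) = Nat.fib (3 * j + 1) + Nat.fib (3 * j + 2) := by
          have h := Nat.fib_add_two (n := 3 * j + 1)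
          rwa [show 3 * j + 1 + 2 = 3 * j + 3 from by omega,
            show 3 * j + 1 + 1 = 3 * j + 2 from by omega] at h
        have hmono : Nat.fib (3 * j) ≤ Nat.fib (3 * j + 1) := Nat.fib_le_fib_succ
        have hlt : Nat.fib (3 * j) < Nat.fib (3 * j + 3) := by
          have h1pos : 1 ≤ Nat.fib (3 * j + 2) := Nat.fib_pos.mpr (by omega)
          omega
        have htn : t ≤ n := by
          have hxn := x.2.2
          omega
        let y : FibVert n := ⟨t, htpos, htn⟩
        have hyval : y.val = t := rfl
        have hsum : x.val + y.val = Nat.fib (3 * j + 2) := by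
          rw [hyval]; omega
        have hadj : (fibSumGraph n).Adj x y := by
          refine ⟨?_, 3 * j + 2, hsum.symm⟩
          intro h
          rw [h, hyval] at hx
          omega
        have hne := hc x y hadj
        have hcy := ih h1j y (by rw [hyval]; omega)
        rcases Nat.even_or_odd j with he | ho
        · have h0 : j % 2 = 0 := Nat.even_iff.mp he
          rw [show (j + 1) % 2 = 1 by omega]
          simp only [h0] at hcy
          exact (key _ _ hne).1 (by simpa using hcy)
        · have h0 : j % 2 = 1 := Nat.odd_iff.mp ho
          rw [show (j + 1) % 2 = 0 by omega]
          simp only [h0, if_pos rfl] at hcy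
          simpa using (key _ _ hne).2 hcy
  intro k hk x
  refine ⟨?_, ?_, ?_, ?_⟩
  · intro hx
    have := lemA (2 * k) (by omega) x hx
    simpa [Nat.mul_mod_right] using this
  · intro hx
    have := lemA (2 * k + 1) (by omega) x hx
    rw [this]
    simp [Nat.add_mod, Nat.mul_mod_right]
  · intro hx
    have h3 : 3 * (2 * k - 1) = 6 * k - 3 := by omega
    have := lemB (2 * k - 1) (by omega) x (by rw [h3]; exact hx)
    rw [this, if_pos (by omega)]
  · intro hx
    have h3 : 3 * (2 * k) = 6 * k := by ring
    have := lemB (2 * k) (by omega) x (by rw [h3]; exact hx)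
    rw [this, if_neg (by omega)]
end

section
/- Let k ≥ 4 and let N satisfy F_k < N < F_{k+1}. Let c : {1, ..., N} → {0, 1} be a proper 2-coloring of the Fibonacci-sum graph G_N with c(1) = 1. If N ≠ F_{k+2}/2, then c(N) = c(N − F_k). If N = F_{k+2}/2, then c(N) = 1 when k ≡ 1 (mod 6) and c(N) = 0 when k ≡ 4 (mod 6). -/
private lemma fin2_eq_of_ne_ne : ∀ a b q : Fin 2, a ≠ q → b ≠ q → a = b := by decide
private lemma fin2_one : ∀ a b : Fin 2, a ≠ b → b = 0 → a = 1 := by decide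
private lemma fin2_zero : ∀ a b : Fin 2, a ≠ b → b = 1 → a = 0 := by decide

private lemma fib_even3 : ∀ j, ∃ t, 2 * t = Nat.fib (3 * j) := by
  intro j
  induction j with
  | zero => exact ⟨0, rfl⟩
  | succ j ih =>
    obtain ⟨t, ht⟩ := ih
    have h30 : Nat.fib (3*j+2) = Nat.fib (3*j) + Nat.fib (3*j+1) := Nat.fib_add_two
    have h31 : Nat.fib (3*j+3) = Nat.fib (3*j+1) + Nat.fib (3*j+2) := Nat.fib_add_two
    have h3e : 3*(j+1) = 3*j+3 := by ring
    refine ⟨Nat.fib (3*j+1) + t, ?_⟩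
    rw [show 3*(j+1) = 3*j+3 by ring]
    omega

/-- Recursion for the color of N in a proper 2-coloring of G_N with c(1) = 1,
where F_k < N < F_{k+1}, k ≥ 4. -/
theorem fibSumGraph_coloring_recursion (N k : ℕ) (hk : 4 ≤ k)
    (h1 : Nat.fib k < N) (h2 : N < Nat.fib (k + 1))
    (c : FibVert N → Fin 2)
    (hc : ∀ x y : FibVert N, (fibSumGraph N).Adj x y → c x ≠ c y)
    (hone : c ⟨1, by omega⟩ = 1) :
    (2 * N ≠ Nat.fib (k + 2) →
      ∀ x y : FibVert N, x.val = N → y.val = N - Nat.fib k → c x = c y) ∧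
    (2 * N = Nat.fib (k + 2) →
      ∀ x : FibVert N, x.val = N →
        (k % 6 = 1 → c x = 1) ∧ (k % 6 = 4 → c x = 0)) := by
  obtain ⟨k', rfl⟩ : ∃ k', k = k' + 4 := ⟨k - 4, by omega⟩
  simp only [show k'+4+1 = k'+5 by omega, show k'+4+2 = k'+6 by omega] at h2 ⊢
  have hf5 : Nat.fib (k'+5) = Nat.fib (k'+3) + Nat.fib (k'+4) := Nat.fib_add_two
  have hf6 : Nat.fib (k'+6) = Nat.fib (k'+4) + Nat.fib (k'+5) := Nat.fib_add_two
  have hle : Nat.fib (k'+3) ≤ Nat.fib (k'+4) := Nat.fib_le_fib_succ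
  have hpos4 : 1 ≤ Nat.fib (k'+4) := Nat.fib_pos.mpr (by omega)
  constructor
  · -- Part 1
    intro hne x y hx hy
    have hple : Nat.fib (k'+5) - N ≤ N := by omega
    have hpge : 1 ≤ Nat.fib (k'+5) - N := by omega
    set p : FibVert N := ⟨Nat.fib (k'+5) - N, hpge, hple⟩ with hpdef
    have hp : p.val = Nat.fib (k'+5) - N := rfl
    have hxp : c x ≠ c p := by
      refine hc x p ⟨?_, k'+5, by omega⟩
      intro h; rw [Subtype.ext_iff] at h; omega
    have hyp : c y ≠ c p := by
      refine hc y p ⟨?_, k'+3, by omega⟩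
      intro h; rw [Subtype.ext_iff] at h; omega
    exact fin2_eq_of_ne_ne _ _ _ hxp hyp
  · -- Part 2
    intro h2N x hx
    -- key alternation lemma
    have key : ∀ j, 1 ≤ j → ∀ v : FibVert N, 2 * v.val = Nat.fib (3*j) →
        c v = if j % 2 = 1 then 1 else 0 := by
      intro j
      induction j with
      | zero => omega
      | succ j ih =>
        intro _ v hv
        rcases Nat.eq_zero_or_pos j with hj0 | hj1
        · subst hj0
          have hv1 : v.val = 1 := by
            rw [show 3*(0+1) = 3 by norm_num] at hv
            have : Nat.fib 3 = 2 := by decide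
            omega
          have : v = (⟨1, by omega⟩ : FibVert N) := Subtype.ext hv1
          rw [this, if_pos (by norm_num)]
          exact hone
        · have h30 : Nat.fib (3*j+2) = Nat.fib (3*j) + Nat.fib (3*j+1) := Nat.fib_add_two
          have h31 : Nat.fib (3*j+3) = Nat.fib (3*j+1) + Nat.fib (3*j+2) := Nat.fib_add_two
          have h3e : 3*(j+1) = 3*j+3 := by ring
          rw [h3e] at hv
          have hpos1 : 0 < Nat.fib (3*j+1) := Nat.fib_pos.mpr (by omega)
          have hfib3 : 2 ≤ Nat.fib (3*j) := by
            have h := Nat.fib_mono (show 3 ≤ 3*j by omega)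
            have : Nat.fib 3 = 2 := by norm_num [Nat.fib]
            omega
          obtain ⟨t, ht⟩ := fib_even3 j
          have hvN : v.val ≤ N := v.2.2
          have htle : t ≤ N := by omega
          have htge : 1 ≤ t := by omega
          set w : FibVert N := ⟨t, htge, htle⟩ with hwdef
          have hw : w.val = t := rfl
          have hvw : c v ≠ c w := by
            refine hc v w ⟨?_, 3*j+2, by omega⟩
            intro h; rw [Subtype.ext_iff] at h; omega
          have hcw := ih (by omega) w (by omega)
          rcases Nat.mod_two_eq_zero_or_one j with hj | hj
          · rw [if_neg (by omega)] at hcw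
            rw [if_pos (by omega)]
            exact fin2_one _ _ hvw hcw
          · rw [if_pos (by omega)] at hcw
            rw [if_neg (by omega)]
            exact fin2_zero _ _ hvw hcw
    -- build w = N - F_k and relate
    have main : ∀ j, k'+3 = 3*j → ∃ wv : FibVert N, c x ≠ c wv ∧
        c wv = if j % 2 = 1 then 1 else 0 := by
      intro j hj
      have hwge : 1 ≤ N - Nat.fib (k'+4) := by omega
      have hwle : N - Nat.fib (k'+4) ≤ N := by omega
      refine ⟨⟨N - Nat.fib (k'+4), hwge, hwle⟩, ?_, ?_⟩
      · refine hc x _ ⟨?_, k'+5, by simp only [hx]; omega⟩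
        intro h; rw [Subtype.ext_iff] at h; simp only [hx] at h; omega
      · refine key j (by omega) _ ?_
        show 2 * (N - Nat.fib (k'+4)) = Nat.fib (3*j)
        rw [← hj]; omega
    constructor
    · intro hk6
      obtain ⟨j, hj, hjpar⟩ : ∃ j, k'+3 = 3*j ∧ j % 2 = 0 := ⟨(k'+3)/3, by omega, by omega⟩
      obtain ⟨wv, hne, hcw⟩ := main j hj
      rw [if_neg (by omega)] at hcw
      exact fin2_one _ _ hne hcw
    · intro hk6
      obtain ⟨j, hj, hjpar⟩ : ∃ j, k'+3 = 3*j ∧ j % 2 = 1 := ⟨(k'+3)/3, by omega, by omega⟩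
      obtain ⟨wv, hne, hcw⟩ := main j hj
      rw [if_pos (by omega)] at hcw
      exact fin2_zero _ _ hne hcw
end

section
/- Let n ≥ 1 and let c : {1, ..., n} → {0, 1} be a proper 2-coloring of the Fibonacci-sum graph G_n with c(1) = 1. Define S(N) = (Σ_{i=1}^{N} c(i)) − N/2 as a rational number for 0 ≤ N ≤ n. Then for every k ≥ 3 with F_k ≤ n: S(F_k) = 0 if k ≡ 0 or 3 (mod 6); S(F_k) = 1/2 if k ≡ 2 or 4 (mod 6); and S(F_k) = −1/2 if k ≡ 1 or 5 (mod 6). -/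
/-- S(N) = (sum of the colors of 1, ..., N) - N/2, as a rational number. -/
def fibColorSum (c : ℕ → Fin 2) (N : ℕ) : ℚ :=
  (∑ i ∈ Finset.Icc 1 N, ((c i).val : ℚ)) - (N : ℚ) / 2

/-- Adjacent vertices have color values summing to 1. -/
lemma fib_adj_sum_one (n : ℕ) (c : ℕ → Fin 2)
    (hc : ∀ x y : FibVert n, (fibSumGraph n).Adj x y → c x.val ≠ c y.val)
    {i j : ℕ} (hi1 : 1 ≤ i) (hin : i ≤ n) (hj1 : 1 ≤ j) (hjn : j ≤ n) (hij : i ≠ j)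
    (hf : ∃ m, Nat.fib m = i + j) : ((c i).val : ℚ) + ((c j).val : ℚ) = 1 := by
  have h := hc ⟨i, hi1, hin⟩ ⟨j, hj1, hjn⟩
    ⟨fun h' => hij (congrArg Subtype.val h'), hf⟩
  have hv : (c i).val ≠ (c j).val := fun hv => h (Fin.ext hv)
  have h1 := (c i).isLt
  have h2 := (c j).isLt
  have : (c i).val + (c j).val = 1 := by omega
  exact_mod_cast this

/-- The color of `fib k` is determined by the parity of `k`. -/
lemma fib_color_parity (n : ℕ) (c : ℕ → Fin 2)
    (hc : ∀ x y : FibVert n, (fibSumGraph n).Adj x y → c x.val ≠ c y.val)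
    (h1 : c 1 = 1) :
    ∀ k : ℕ, 2 ≤ k → Nat.fib k ≤ n →
      ((c (Nat.fib k)).val : ℚ) = if k % 2 = 0 then 1 else 0 := by
  intro k hk
  induction k, hk using Nat.le_induction with
  | base => intro h; simp [Nat.fib, h1]
  | succ k hk IH =>
    intro hkn
    have hlt : Nat.fib k < Nat.fib (k + 1) := Nat.fib_lt_fib_succ hk
    have hkn' : Nat.fib k ≤ n := le_of_lt (lt_of_lt_of_le hlt hkn)
    have hpos : 1 ≤ Nat.fib k := Nat.fib_pos.2 (by omega)
    have hadj := fib_adj_sum_one n c hc hpos hkn'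
      (le_of_lt (lt_of_le_of_lt hpos hlt)) hkn (by omega)
      ⟨k + 2, by rw [Nat.fib_add_two]⟩
    have := IH hkn'
    rcases Nat.even_or_odd k with he | ho
    · have h2 : k % 2 = 0 := Nat.even_iff.1 he
      have h3 : (k + 1) % 2 = 1 := by omega
      rw [h2, if_pos rfl] at this
      rw [h3, if_neg (by norm_num)]
      linarith
    · have h2 : k % 2 = 1 := Nat.odd_iff.1 ho
      have h3 : (k + 1) % 2 = 0 := by omega
      rw [h2, if_neg (by norm_num)] at this
      rw [h3, if_pos rfl]
      linarith

/-- The key recursion for S at Fibonacci numbers. -/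
lemma fib_colorSum_rec (n : ℕ) (c : ℕ → Fin 2)
    (hc : ∀ x y : FibVert n, (fibSumGraph n).Adj x y → c x.val ≠ c y.val)
    (k : ℕ) (hk : 2 ≤ k) (hkn : Nat.fib (k + 2) ≤ n) :
    fibColorSum c (Nat.fib (k + 2)) =
      fibColorSum c (Nat.fib (k + 1)) - fibColorSum c (Nat.fib k) +
      (((c (Nat.fib k)).val : ℚ) + ((c (Nat.fib (k + 2))).val : ℚ) - 1) := by
  set a := Nat.fib k with ha
  set b := Nat.fib (k + 1) with hb
  set e := Nat.fib (k + 2) with he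
  have habe : e = a + b := Nat.fib_add_two
  have ha1 : 1 ≤ a := Nat.fib_pos.2 (by omega)
  have hab : a < b := Nat.fib_lt_fib_succ hk
  have hbe : b < e := Nat.fib_lt_fib_succ (by omega)
  have hbn : b ≤ n := by omega
  -- sums over Ioc
  have hIcc : ∀ N : ℕ, Finset.Icc 1 N = Finset.Ioc 0 N := fun N => Finset.Icc_add_one_left_eq_Ioc 0 N
  -- split sum up to e
  have hsplit : (∑ i ∈ Finset.Ioc 0 e, ((c i).val : ℚ)) =
      (∑ i ∈ Finset.Ioc 0 b, ((c i).val : ℚ)) +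
      (∑ i ∈ Finset.Ioc b (e - 1), ((c i).val : ℚ)) + ((c e).val : ℚ) := by
    rw [← Finset.sum_Ioc_consecutive (fun i => ((c i).val : ℚ)) (Nat.zero_le b) (le_of_lt hbe)]
    have : e = (e - 1) + 1 := by omega
    rw [this, Finset.sum_Ioc_succ_top (by omega), ← this]
    ring
  -- reflection: the middle sum
  have hmid : (∑ i ∈ Finset.Ioc b (e - 1), ((c i).val : ℚ)) =
      ∑ j ∈ Finset.Ioc 0 (a - 1), (1 - ((c j).val : ℚ)) := by
    apply Finset.sum_nbij' (fun m => e - m) (fun j => e - j)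
    · intro m hm
      simp only [Finset.mem_Ioc] at hm ⊢
      omega
    · intro j hj
      simp only [Finset.mem_Ioc] at hj ⊢
      omega
    · intro m hm; simp only [Finset.mem_Ioc] at hm; omega
    · intro j hj; simp only [Finset.mem_Ioc] at hj; omega
    · intro m hm
      simp only [Finset.mem_Ioc] at hm
      have hsum := fib_adj_sum_one n c hc (i := m) (j := e - m) (by omega) (by omega)
        (by omega) (by omega) (by omega) ⟨k + 2, by omega⟩
      linarith
  have hmid2 : (∑ j ∈ Finset.Ioc 0 (a - 1), (1 - ((c j).val : ℚ))) =
      ((a : ℚ) - 1) - ((∑ j ∈ Finset.Ioc 0 a, ((c j).val : ℚ)) - ((c a).val : ℚ)) := by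
    rw [Finset.sum_sub_distrib]
    have h1 : (∑ _j ∈ Finset.Ioc 0 (a - 1), (1 : ℚ)) = ((a : ℚ) - 1) := by
      rw [Finset.sum_const, Nat.card_Ioc]
      have : (a - 1 - 0 : ℕ) = a - 1 := by omega
      rw [this]
      have : ((a - 1 : ℕ) : ℚ) = (a : ℚ) - 1 := by
        push_cast [Nat.cast_sub ha1]; ring
      simp [this]
    have h2 : (∑ j ∈ Finset.Ioc 0 a, ((c j).val : ℚ)) =
        (∑ j ∈ Finset.Ioc 0 (a - 1), ((c j).val : ℚ)) + ((c a).val : ℚ) := by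
      have : a = (a - 1) + 1 := by omega
      rw [this, Finset.sum_Ioc_succ_top (by omega), ← this]
    rw [h1, h2]
    ring
  simp only [fibColorSum, hIcc]
  rw [hsplit, hmid, hmid2]
  have hcast : (e : ℚ) = (a : ℚ) + (b : ℚ) := by exact_mod_cast congrArg Nat.cast habe
  rw [hcast]
  ring

/-- Values of S(F_k) according to k mod 6, for any proper 2-coloring of G_n
with c(1) = 1 and F_k ≤ n, k ≥ 3. -/
theorem fibSumGraph_colorSum_fib (n : ℕ) (hn : 1 ≤ n) (c : ℕ → Fin 2)
    (hc : ∀ x y : FibVert n, (fibSumGraph n).Adj x y → c x.val ≠ c y.val)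
    (h1 : c 1 = 1) :
    ∀ k : ℕ, 3 ≤ k → Nat.fib k ≤ n →
      ((k % 6 = 0 ∨ k % 6 = 3) → fibColorSum c (Nat.fib k) = 0) ∧
      ((k % 6 = 2 ∨ k % 6 = 4) → fibColorSum c (Nat.fib k) = 1 / 2) ∧
      ((k % 6 = 1 ∨ k % 6 = 5) → fibColorSum c (Nat.fib k) = -(1 / 2)) := by
  set g : ℕ → ℚ := fun r =>
    if r = 0 ∨ r = 3 then 0 else if r = 2 ∨ r = 4 then 1/2 else -(1/2) with hg
  have main : ∀ k : ℕ, 3 ≤ k → Nat.fib k ≤ n → fibColorSum c (Nat.fib k) = g (k % 6) := by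
    intro k
    induction k using Nat.strong_induction_on with
    | _ k IH =>
      intro hk hkn
      rcases eq_or_lt_of_le hk with h3 | h4
      · -- k = 3
        subst h3
        have h2n : 2 ≤ n := le_trans (by norm_num [Nat.fib]) hkn
        have hc2 : ((c 1).val : ℚ) + ((c 2).val : ℚ) = 1 :=
          fib_adj_sum_one n c hc le_rfl (by omega) (by omega) h2n (by omega)
            ⟨4, by norm_num [Nat.fib]⟩
        have : Nat.fib 3 = 2 := by norm_num [Nat.fib]
        rw [this]
        simp only [fibColorSum, hg]
        rw [show Finset.Icc 1 2 = {1, 2} from by decide,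
          Finset.sum_pair (by norm_num : (1:ℕ) ≠ 2)]
        rw [h1] at hc2 ⊢
        norm_num at hc2 ⊢
        exact hc2
      rcases eq_or_lt_of_le (show 4 ≤ k from h4) with h4' | h5
      · -- k = 4
        have hk4 : k = 4 := h4'.symm
        subst hk4
        have h3n : 3 ≤ n := le_trans (by norm_num [Nat.fib]) hkn
        have hc2 : ((c 1).val : ℚ) + ((c 2).val : ℚ) = 1 :=
          fib_adj_sum_one n c hc le_rfl (by omega) (by omega) (by omega) (by omega)
            ⟨4, by norm_num [Nat.fib]⟩
        have hc3 : ((c 2).val : ℚ) + ((c 3).val : ℚ) = 1 :=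
          fib_adj_sum_one n c hc (by omega) (by omega) (by omega) h3n (by omega)
            ⟨5, by norm_num [Nat.fib]⟩
        have : Nat.fib 4 = 3 := by norm_num [Nat.fib]
        rw [this]
        simp only [fibColorSum, hg]
        rw [show Finset.Icc 1 3 = {1, 2, 3} from by decide,
          Finset.sum_insert (by decide), Finset.sum_pair (by norm_num : (2:ℕ) ≠ 3)]
        rw [h1] at hc2 ⊢
        norm_num at hc2 ⊢
        linarith
      · -- k ≥ 5
        obtain ⟨j, rfl⟩ : ∃ j, k = j + 2 := ⟨k - 2, by omega⟩
        have hj3 : 3 ≤ j := by omega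
        have hj1kn : Nat.fib (j + 1) ≤ n :=
          le_trans (Nat.fib_mono (by omega)) hkn
        have hjkn : Nat.fib j ≤ n := le_trans (Nat.fib_mono (by omega)) hkn
        have hrec := fib_colorSum_rec n c hc j (by omega) hkn
        have hIH1 := IH (j + 1) (by omega) (by omega) hj1kn
        have hIH2 := IH j (by omega) hj3 hjkn
        have hpar1 := fib_color_parity n c hc h1 j (by omega) hjkn
        have hpar2 := fib_color_parity n c hc h1 (j + 2) (by omega) hkn
        have hmod : (j + 2) % 2 = j % 2 := by omega
        rw [hmod] at hpar2
        rw [hIH1, hIH2, hpar1, hpar2] at hrec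
        rw [hrec, hg]
        have h6 : j % 6 = 0 ∨ j % 6 = 1 ∨ j % 6 = 2 ∨ j % 6 = 3 ∨ j % 6 = 4 ∨ j % 6 = 5 := by
          omega
        rcases h6 with h | h | h | h | h | h <;>
          · have e1 : (j + 1) % 6 = (j % 6 + 1) % 6 := by omega
            have e2 : (j + 2) % 6 = (j % 6 + 2) % 6 := by omega
            have e3 : j % 2 = j % 6 % 2 := by omega
            rw [e1, e2, e3, h]
            norm_num
  intro k hk hkn
  have h := main k hk hkn
  refine ⟨?_, ?_, ?_⟩ <;> rintro (hm | hm) <;> rw [h, hg, hm] <;> norm_num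
end

section
/- Let n ≥ 1 and let c : {1, ..., n} → {0, 1} be a proper 2-coloring of the Fibonacci-sum graph G_n with c(1) = 1, and define S(N) = (Σ_{i=1}^{N} c(i)) − N/2 as a rational number, with S(0) = 0. Let N ≤ n and k be integers with F_k < N < F_{k+1}. If k ≡ 0, 2, 3, or 5 (mod 6), or if k ≡ 1 or 4 (mod 6) and N < F_{k+2}/2, then S(N) = S(F_k) + S(N − F_k). -/
/-- Parity of Fibonacci numbers: `F_n` is even iff `3 ∣ n`. -/
lemma fib_mod_two_s12 (n : ℕ) : Nat.fib n % 2 = if n % 3 = 0 then 0 else 1 := by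
  induction n using Nat.strong_induction_on with
  | _ n ih =>
    match n with
    | 0 => simp
    | 1 => simp [Nat.fib]
    | (m + 2) =>
      rw [Nat.fib_add_two]
      have h1 := ih m (by omega)
      have h2 := ih (m + 1) (by omega)
      split_ifs at h1 h2 ⊢ <;> omega

/-- Additivity S(N) = S(F_k) + S(N - F_k) under the stated congruence
conditions on k, for F_k < N < F_{k+1}, N ≤ n. -/
theorem fibSumGraph_colorSum_additive (n : ℕ) (hn : 1 ≤ n) (c : ℕ → Fin 2)
    (hc : ∀ x y : FibVert n, (fibSumGraph n).Adj x y → c x.val ≠ c y.val)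
    (h1 : c 1 = 1) (N k : ℕ) (hN : N ≤ n)
    (hk1 : Nat.fib k < N) (hk2 : N < Nat.fib (k + 1))
    (hcase : (k % 6 = 0 ∨ k % 6 = 2 ∨ k % 6 = 3 ∨ k % 6 = 5) ∨
      ((k % 6 = 1 ∨ k % 6 = 4) ∧ 2 * N < Nat.fib (k + 2))) :
    fibColorSum c N =
      fibColorSum c (Nat.fib k) + fibColorSum c (N - Nat.fib k) := by
  match k, hk1, hk2, hcase with
  | 0, hk1, hk2, _ => simp [Nat.fib] at hk1 hk2; omega
  | 1, hk1, hk2, _ => simp [Nat.fib] at hk1 hk2; omega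
  | 2, hk1, hk2, _ =>
    have e2 : Nat.fib 2 = 1 := rfl
    have e3 : Nat.fib 3 = 2 := rfl
    rw [e2] at hk1; rw [show (2:ℕ)+1 = 3 from rfl, e3] at hk2; omega
  | (m + 3), hk1, hk2, hcase =>
    set F := Nat.fib (m + 3) with hF
    set G := Nat.fib (m + 2) with hG
    have hFG : Nat.fib (m + 4) = G + F := Nat.fib_add_two
    have hGF : G ≤ F := Nat.fib_le_fib_succ
    have hGpos : 0 < G := Nat.fib_pos.mpr (by omega)
    have hk2' : N < G + F := by
      rw [show m + 3 + 1 = m + 4 from rfl, hFG] at hk2; exact hk2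
    -- in all cases, 2*j ≠ G for relevant j
    have hj2 : ∀ j, 1 ≤ j → j ≤ N - F → 2 * j ≠ G := by
      intro j hj1 hjN
      rcases hcase with h | ⟨h, hN2⟩
      · have hmod := fib_mod_two_s12 (m + 2)
        have : ¬ ((m + 2) % 3 = 0) := by omega
        rw [if_neg this] at hmod
        omega
      · have h5 : Nat.fib (m + 3 + 2) = F + Nat.fib (m + 4) := Nat.fib_add_two
        rw [hFG] at h5
        omega
    have hEq : ∀ a b d : Fin 2, a ≠ b → d ≠ b → a = d := by decide
    have hkey : ∀ j, 1 ≤ j → j ≤ N - F → c (F + j) = c j := by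
      intro j hj1 hjN
      have hjG : j < G := by omega
      have hFjn : F + j ≤ n := by omega
      have hbn : G - j ≤ n := by omega
      have adj1 : (fibSumGraph n).Adj ⟨F + j, by omega⟩ ⟨G - j, by omega⟩ := by
        refine ⟨?_, m + 4, ?_⟩
        case refine_2 => show Nat.fib (m + 4) = (F + j) + (G - j); omega
        intro h
        have := congrArg Subtype.val h
        simp only at this
        omega
      have adj2 : (fibSumGraph n).Adj ⟨j, by omega⟩ ⟨G - j, by omega⟩ := by
        refine ⟨?_, m + 2, ?_⟩
        case refine_2 => show Nat.fib (m + 2) = j + (G - j); omega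
        intro h
        have := congrArg Subtype.val h
        simp only at this
        exact hj2 j hj1 hjN (by omega)
      exact hEq _ _ _ (hc _ _ adj1) (hc _ _ adj2)
    -- sum manipulation
    have hsum1 : ∀ M : ℕ, (∑ i ∈ Finset.Icc 1 M, ((c i).val : ℚ))
        = ∑ i ∈ Finset.Ioc 0 M, ((c i).val : ℚ) := by
      intro M; rw [← Finset.Icc_add_one_left_eq_Ioc]; rfl
    have hsplit : (∑ i ∈ Finset.Ioc 0 F, ((c i).val : ℚ))
        + ∑ i ∈ Finset.Ioc F N, ((c i).val : ℚ)
        = ∑ i ∈ Finset.Ioc 0 N, ((c i).val : ℚ) :=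
      Finset.sum_Ioc_consecutive _ (by omega) (by omega)
    have hmap : (∑ i ∈ Finset.Ioc F N, ((c i).val : ℚ))
        = ∑ i ∈ Finset.Ioc 0 (N - F), ((c (F + i)).val : ℚ) := by
      rw [show Finset.Ioc F N = Finset.map (addLeftEmbedding F) (Finset.Ioc 0 (N - F)) by
        rw [Finset.map_add_left_Ioc]; congr 1 <;> omega]
      rw [Finset.sum_map]
      rfl
    have hcongr : (∑ i ∈ Finset.Ioc 0 (N - F), ((c (F + i)).val : ℚ))
        = ∑ i ∈ Finset.Ioc 0 (N - F), ((c i).val : ℚ) := by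
      refine Finset.sum_congr rfl ?_
      intro i hi
      rw [Finset.mem_Ioc] at hi
      rw [hkey i (by omega) hi.2]
    have hFN : (F : ℚ) + ((N - F : ℕ) : ℚ) = (N : ℚ) := by
      rw [Nat.cast_sub (by omega : F ≤ N)]; ring
    simp only [fibColorSum, hsum1]
    rw [← hsplit, hmap, hcongr]
    rw [← hFN]
    ring
end

section
/- For every n ≥ 7, the girth of the Fibonacci-sum graph G_n is 4 (that is, G_n contains a cycle of length 4 and contains no cycle of length 3). -/
lemma four_le_of_three_le_fib {p : ℕ} (h : 3 ≤ Nat.fib p) : 4 ≤ p := by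
  by_contra hp
  interval_cases p <;> revert h <;> decide

lemma fib_triangle_aux {p q r : ℕ} (hp : 4 ≤ p) (hpq : p < q) (hqr : q < r) :
    Nat.fib p + Nat.fib q ≤ Nat.fib r := by
  have h1 : Nat.fib p ≤ Nat.fib (r - 2) := Nat.fib_mono (by omega)
  have h2 : Nat.fib q ≤ Nat.fib (r - 1) := Nat.fib_mono (by omega)
  have h3 : Nat.fib (r - 2) + Nat.fib (r - 1) = Nat.fib r := by
    have : r - 2 + 2 = r := by omega
    rw [← this, Nat.fib_add_two]
    congr 1
  omega

lemma fib_key {p q r : ℕ} (hp : 4 ≤ p) (hq : 4 ≤ q) (hr : 4 ≤ r)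
    (hpq : p ≠ q) (hqr : q ≠ r) (hpr : p ≠ r)
    (h1 : Nat.fib r < Nat.fib p + Nat.fib q)
    (h2 : Nat.fib q < Nat.fib p + Nat.fib r)
    (h3 : Nat.fib p < Nat.fib q + Nat.fib r) : False := by
  rcases Nat.lt_or_ge p q with h | h <;> rcases Nat.lt_or_ge q r with h' | h'
  · exact absurd (fib_triangle_aux (p := p) (q := q) (r := r) hp h h') (by omega)
  · rcases Nat.lt_or_ge p r with h'' | h''
    · exact absurd (fib_triangle_aux (p := p) (q := r) (r := q) hp h'' (by omega)) (by omega)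
    · exact absurd (fib_triangle_aux (p := r) (q := p) (r := q) hr (by omega) h) (by omega)
  · rcases Nat.lt_or_ge p r with h'' | h''
    · exact absurd (fib_triangle_aux (p := q) (q := p) (r := r) hq (by omega) h'') (by omega)
    · exact absurd (fib_triangle_aux (p := q) (q := r) (r := p) hq (by omega) (by omega)) (by omega)
  · exact absurd (fib_triangle_aux (p := r) (q := q) (r := p) hr (by omega) (by omega)) (by omega)

lemma no_fib_triangle {x y z : ℕ} (hx : 1 ≤ x) (hy : 1 ≤ y) (hz : 1 ≤ z)
    (hxy : x ≠ y) (hyz : y ≠ z) (hxz : x ≠ z)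
    {p q r : ℕ} (hp : Nat.fib p = x + y) (hq : Nat.fib q = y + z)
    (hr : Nat.fib r = z + x) : False := by
  have h4p : 4 ≤ p := four_le_of_three_le_fib (by omega)
  have h4q : 4 ≤ q := four_le_of_three_le_fib (by omega)
  have h4r : 4 ≤ r := four_le_of_three_le_fib (by omega)
  have hpq : p ≠ q := by rintro rfl; omega
  have hqr : q ≠ r := by rintro rfl; omega
  have hpr : p ≠ r := by rintro rfl; omega
  exact fib_key h4p h4q h4r hpq hqr hpr (by omega) (by omega) (by omega)

lemma fibSumGraph_no_triangle {n : ℕ} (a b c : FibVert n)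
    (h1 : (fibSumGraph n).Adj a b) (h2 : (fibSumGraph n).Adj b c)
    (h3 : (fibSumGraph n).Adj c a) : False := by
  obtain ⟨hne1, p, hp⟩ := h1
  obtain ⟨hne2, q, hq⟩ := h2
  obtain ⟨hne3, r, hr⟩ := h3
  exact no_fib_triangle a.2.1 b.2.1 c.2.1
    (fun h => hne1 (Subtype.ext h)) (fun h => hne2 (Subtype.ext h))
    (fun h => hne3 (Subtype.ext h.symm)) hp hq hr

lemma fibSumGraph_no_three_cycle {n : ℕ} {a : FibVert n} {w : (fibSumGraph n).Walk a a}
    (hw : w.IsCycle) : w.length ≠ 3 := by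
  intro hlen
  cases w with
  | nil => simp at hlen
  | cons h1 w1 =>
    cases w1 with
    | nil => simp at hlen
    | cons h2 w2 =>
      cases w2 with
      | nil => simp at hlen
      | cons h3 w3 =>
        have hl0 : w3.length = 0 := by
          simp only [SimpleGraph.Walk.length_cons] at hlen; omega
        have heq := SimpleGraph.Walk.eq_of_length_eq_zero hl0
        subst heq
        exact fibSumGraph_no_triangle _ _ _ h1 h2 h3

/-- For every n ≥ 7 the girth of G_n is 4. -/
theorem fibSumGraph_girth (n : ℕ) (hn : 7 ≤ n) :
    (fibSumGraph n).girth = 4 := by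
  set G := fibSumGraph n with hG
  let v1 : FibVert n := ⟨1, by omega⟩
  let v2 : FibVert n := ⟨2, by omega⟩
  let v6 : FibVert n := ⟨6, by omega⟩
  let v7 : FibVert n := ⟨7, by omega⟩
  have a12 : G.Adj v1 v2 := ⟨by simp [v1, v2, Subtype.ext_iff], 4, rfl⟩
  have a26 : G.Adj v2 v6 := ⟨by simp [v2, v6, Subtype.ext_iff], 6, rfl⟩
  have a67 : G.Adj v6 v7 := ⟨by simp [v6, v7, Subtype.ext_iff], 7, rfl⟩
  have a71 : G.Adj v7 v1 := ⟨by simp [v7, v1, Subtype.ext_iff], 6, rfl⟩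
  let w : G.Walk v1 v1 :=
    SimpleGraph.Walk.cons a12 (SimpleGraph.Walk.cons a26
      (SimpleGraph.Walk.cons a67 (SimpleGraph.Walk.cons a71 SimpleGraph.Walk.nil)))
  have hwc : w.IsCycle := by
    rw [SimpleGraph.Walk.isCycle_def, SimpleGraph.Walk.isTrail_def]
    refine ⟨?_, by simp [w], ?_⟩
    · simp only [w, SimpleGraph.Walk.edges_cons, SimpleGraph.Walk.edges_nil,
        List.nodup_cons, List.nodup_nil, List.mem_cons, List.mem_singleton,
        List.not_mem_nil, Sym2.eq, Sym2.rel_iff', Prod.mk.injEq, Prod.swap_prod_mk,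
        Subtype.mk.injEq, v1, v2, v6, v7, and_true, not_or]
      norm_num
    · simp only [w, SimpleGraph.Walk.support_cons, SimpleGraph.Walk.support_nil,
        List.tail_cons, List.nodup_cons, List.mem_cons, List.not_mem_nil,
        List.mem_singleton, List.nodup_nil,
        Subtype.mk.injEq, v1, v2, v6, v7, and_true, not_or]
      norm_num
  have hwl : w.length = 4 := by simp [w]
  have hle : G.egirth ≤ 4 := by
    calc G.egirth ≤ (w.length : ℕ∞) :=
          iInf_le_of_le v1 (iInf_le_of_le w (iInf_le_of_le hwc le_rfl))
      _ = 4 := by rw [hwl]; rfl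
  have hge : (4 : ℕ∞) ≤ G.egirth := by
    rw [SimpleGraph.le_egirth]
    intro a c hc
    have h3 := hc.three_le_length
    have h4 := fibSumGraph_no_three_cycle hc
    have : 4 ≤ c.length := by omega
    exact_mod_cast this
  have : G.egirth = 4 := le_antisymm hle hge
  simp [SimpleGraph.girth, this]
end

section
/- For every k ≥ 2, the Fibonacci-sum graph G_n with n = F_{2k+3} − 1 contains a cycle of length 2k. -/
/-- The explicit cycle: `1, fib 4 - 1, fib 5 + 1, fib 6 - 1, fib 7 + 1, ...`. -/
def fibCyc (i : ℕ) : ℕ :=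
  if i = 0 then 1 else if i % 2 = 1 then Nat.fib (i + 3) - 1 else Nat.fib (i + 3) + 1

lemma fibCyc_zero : fibCyc 0 = 1 := rfl

lemma fibCyc_odd {i : ℕ} (h : i % 2 = 1) : fibCyc i = Nat.fib (i + 3) - 1 := by
  unfold fibCyc
  rw [if_neg (by omega), if_pos h]

lemma fibCyc_even {i : ℕ} (h0 : i ≠ 0) (h : i % 2 = 0) :
    fibCyc i = Nat.fib (i + 3) + 1 := by
  unfold fibCyc
  rw [if_neg h0, if_neg (by omega)]

lemma fib_one_le {m : ℕ} (hm : 1 ≤ m) : 1 ≤ Nat.fib m :=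
  Nat.fib_pos.mpr hm

lemma fibCyc_lt_succ (i : ℕ) : fibCyc i < fibCyc (i + 1) := by
  rcases Nat.eq_zero_or_pos i with rfl | hi
  · have h4 : Nat.fib (0 + 1 + 3) = 3 := by decide
    rw [fibCyc_zero, fibCyc_odd (by norm_num)]
    omega
  · have hle : Nat.fib (i + 3) ≤ Nat.fib (i + 4) := Nat.fib_mono (by omega)
    have hpos : 1 ≤ Nat.fib (i + 3) := fib_one_le (by omega)
    rcases Nat.mod_two_eq_zero_or_one i with h | h
    · -- i even, i ≥ 2
      have hi2 : 2 ≤ i := by omega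
      have hadd : Nat.fib (i + 4) = Nat.fib (i + 2) + Nat.fib (i + 3) :=
        Nat.fib_add_two
      have h3 : (3 : ℕ) ≤ Nat.fib (i + 2) := by
        have : Nat.fib 4 ≤ Nat.fib (i + 2) := Nat.fib_mono (by omega)
        simpa [show Nat.fib 4 = 3 from rfl] using this
      rw [fibCyc_even (by omega) h, fibCyc_odd (by omega),
        show i + 1 + 3 = i + 4 from by omega]
      omega
    · rw [fibCyc_odd h, fibCyc_even (by omega) (by omega),
        show i + 1 + 3 = i + 4 from by omega]
      omega

lemma fibCyc_strictMono : StrictMono fibCyc :=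
  strictMono_nat_of_lt_succ fibCyc_lt_succ

/-- For every k ≥ 2 the graph G_n with n = F_{2k+3} - 1 contains a cycle of
length 2k (a sequence of 2k distinct vertices, cyclically consecutively
adjacent). -/
theorem fibSumGraph_cycle_of_length (k : ℕ) (hk : 2 ≤ k) :
    ∃ a : Fin (2 * k) → FibVert (Nat.fib (2 * k + 3) - 1),
      Function.Injective a ∧
      ∀ i : Fin (2 * k),
        (fibSumGraph (Nat.fib (2 * k + 3) - 1)).Adj (a i)
          (a ⟨(i.val + 1) % (2 * k), Nat.mod_lt _ (by omega)⟩) := by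
  have hfib1 : ∀ m : ℕ, 1 ≤ m → 1 ≤ Nat.fib m := fun m hm => Nat.fib_pos.mpr hm
  have hbound : ∀ i : ℕ, i < 2 * k →
      1 ≤ fibCyc i ∧ fibCyc i ≤ Nat.fib (2 * k + 3) - 1 := by
    intro i hi
    constructor
    · rcases Nat.eq_zero_or_pos i with rfl | hi0
      · simp [fibCyc_zero]
      · rcases Nat.mod_two_eq_zero_or_one i with h | h
        · rw [fibCyc_even (by omega) h]; omega
        · rw [fibCyc_odd h]
          have : Nat.fib 4 ≤ Nat.fib (i + 3) := Nat.fib_mono (by omega)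
          have h4 : Nat.fib 4 = 3 := rfl
          omega
    · have hmono : fibCyc i ≤ fibCyc (2 * k - 1) :=
        fibCyc_strictMono.monotone (by omega)
      have hlast : fibCyc (2 * k - 1) = Nat.fib (2 * k + 2) - 1 := by
        rw [fibCyc_odd (by omega), show 2 * k - 1 + 3 = 2 * k + 2 from by omega]
      have hle : Nat.fib (2 * k + 2) ≤ Nat.fib (2 * k + 3) := Nat.fib_mono (by omega)
      omega
  refine ⟨fun i => ⟨fibCyc i.val, hbound i.val i.isLt⟩, ?_, ?_⟩
  · intro i j hij
    have : fibCyc i.val = fibCyc j.val := congrArg Subtype.val hij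
    exact Fin.ext (fibCyc_strictMono.injective this)
  · intro i
    set j : ℕ := (i.val + 1) % (2 * k) with hj
    have hjlt : j < 2 * k := Nat.mod_lt _ (by omega)
    have hine : i.val ≠ j := by
      rcases Nat.lt_or_ge (i.val + 1) (2 * k) with h | h
      · have : j = i.val + 1 := Nat.mod_eq_of_lt h
        omega
      · have hi : i.val = 2 * k - 1 := by omega
        have : j = 0 := by
          rw [hj, hi]
          simp [Nat.sub_add_cancel (by omega : 1 ≤ 2 * k)]
        omega
    constructor
    · intro hcontra
      have : fibCyc i.val = fibCyc j := congrArg Subtype.val hcontra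
      exact hine (fibCyc_strictMono.injective this)
    · -- exhibit the Fibonacci sum
      show ∃ m, Nat.fib m = fibCyc i.val + fibCyc j
      rcases Nat.eq_zero_or_pos i.val with h0 | hipos
      · -- i = 0, j = 1
        have hj1 : j = 1 := by rw [hj, h0]; exact Nat.mod_eq_of_lt (by omega)
        refine ⟨4, ?_⟩
        rw [h0, hj1, fibCyc_zero, fibCyc_odd (by norm_num),
          show (1 : ℕ) + 3 = 4 from by norm_num]
        have h4 : Nat.fib 4 = 3 := by decide
        omega
      rcases Nat.lt_or_ge (i.val + 1) (2 * k) with h | h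
      · -- interior edge: sum is fib (i + 5)
        have hj1 : j = i.val + 1 := Nat.mod_eq_of_lt h
        refine ⟨i.val + 5, ?_⟩
        have hadd : Nat.fib (i.val + 5) = Nat.fib (i.val + 3) + Nat.fib (i.val + 4) := by
          rw [show i.val + 5 = i.val + 3 + 2 from by omega, Nat.fib_add_two,
            show i.val + 3 + 1 = i.val + 4 from by omega]
        have hp3 : 1 ≤ Nat.fib (i.val + 3) := hfib1 _ (by omega)
        have hp4 : 1 ≤ Nat.fib (i.val + 4) := hfib1 _ (by omega)
        rcases Nat.mod_two_eq_zero_or_one i.val with hpar | hpar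
        · rw [hj1, fibCyc_even (by omega) hpar, fibCyc_odd (by omega),
            show i.val + 1 + 3 = i.val + 4 from by omega]
          omega
        · rw [hj1, fibCyc_odd hpar, fibCyc_even (by omega) (by omega),
            show i.val + 1 + 3 = i.val + 4 from by omega]
          omega
      · -- closing edge: i = 2k - 1, j = 0
        have hi : i.val = 2 * k - 1 := by omega
        have hj0 : j = 0 := by
          rw [hj, hi]
          simp [Nat.sub_add_cancel (by omega : 1 ≤ 2 * k)]
        refine ⟨2 * k + 2, ?_⟩
        have hodd : i.val % 2 = 1 := by omega
        rw [hj0, fibCyc_zero, fibCyc_odd hodd, hi,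
          show 2 * k - 1 + 3 = 2 * k + 2 from by omega]
        have hp : 1 ≤ Nat.fib (2 * k + 2) := hfib1 _ (by omega)
        omega
end

section
/- For every n ≥ 1, every cycle of length at least 6 in the Fibonacci-sum graph G_n contains a chord having exactly two vertices of the cycle on one side; equivalently, every cycle (a_1, ..., a_m) with m ≥ 6 in G_n has four consecutive cycle vertices a_i, a_{i+1}, a_{i+2}, a_{i+3} (indices modulo m) such that {a_i, a_{i+3}} is an edge of G_n, so that these four vertices form a 4-cycle. -/
/-- A Fibonacci value strictly between `fib a` and `fib (a+2)` equals `fib (a+1)`. -/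
lemma fib_between_s17 (a r : ℕ) (h1 : Nat.fib a < Nat.fib r)
    (h2 : Nat.fib r < Nat.fib (a + 2)) : Nat.fib r = Nat.fib (a + 1) := by
  rcases lt_trichotomy r (a + 1) with h | h | h
  · have := Nat.fib_mono (show r ≤ a by omega)
    omega
  · rw [h]
  · have := Nat.fib_mono (show a + 2 ≤ r by omega)
    omega

/-- Key arithmetic lemma: if `M` is the largest, `u < w` its two neighbors,
`y` a neighbor of `w`, all sums Fibonacci, then `u + y` is Fibonacci. -/
lemma chord_arith (M u w y p q r : ℕ) (hu : 1 ≤ u) (huw : u < w)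
    (hwM : w < M) (hyM : y < M) (hM : 6 ≤ M)
    (hp : Nat.fib p = u + M) (hq : Nat.fib q = w + M)
    (hr : Nat.fib r = w + y) : ∃ t, Nat.fib t = u + y := by
  have hp6 : 6 ≤ p := by
    by_contra h
    have h5 := Nat.fib_mono (show p ≤ 5 by omega)
    have hv : Nat.fib 5 = 5 := by decide
    omega
  obtain ⟨p', rfl⟩ : ∃ p', p = p' + 2 := ⟨p - 2, by omega⟩
  have A : Nat.fib (p' + 2) = Nat.fib p' + Nat.fib (p' + 1) := Nat.fib_add_two
  have B : Nat.fib (p' + 3) = Nat.fib (p' + 1) + Nat.fib (p' + 2) := Nat.fib_add_two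
  have C : Nat.fib (p' + 4) = Nat.fib (p' + 2) + Nat.fib (p' + 3) := Nat.fib_add_two
  have hm23 : Nat.fib (p' + 2) ≤ Nat.fib (p' + 3) := Nat.fib_mono (by omega)
  have D1 : Nat.fib (p' + 2 + 2) = Nat.fib (p' + 4) := rfl
  have D2 : Nat.fib (p' + 2 + 1) = Nat.fib (p' + 3) := rfl
  have D3 : Nat.fib (p' + 1 + 2) = Nat.fib (p' + 3) := rfl
  have D4 : Nat.fib (p' + 1 + 1) = Nat.fib (p' + 2) := rfl
  have hq' : Nat.fib q = Nat.fib (p' + 3) := by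
    have := fib_between_s17 (p' + 2) q (by omega) (by omega)
    omega
  have hr' : Nat.fib r = Nat.fib (p' + 2) := by
    have := fib_between_s17 (p' + 1) r (by omega) (by omega)
    omega
  exact ⟨p', by omega⟩

/-- Every cycle of length at least 6 in G_n has four consecutive vertices
a_i, a_{i+1}, a_{i+2}, a_{i+3} (indices mod m) with {a_i, a_{i+3}} an edge,
forming a 4-cycle. -/
theorem fibSumGraph_long_cycle_chord (n m : ℕ) (hn : 1 ≤ n) (hm : 6 ≤ m)
    (a : Fin m → FibVert n) (ha : Function.Injective a)
    (hcyc : ∀ i : Fin m,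
      (fibSumGraph n).Adj (a i) (a ⟨(i.val + 1) % m, Nat.mod_lt _ (by omega)⟩)) :
    ∃ i : Fin m,
      (fibSumGraph n).Adj (a i) (a ⟨(i.val + 3) % m, Nat.mod_lt _ (by omega)⟩) := by
  have hm0 : 0 < m := by omega
  set J : ℕ → Fin m := fun t => ⟨t % m, Nat.mod_lt _ hm0⟩ with hJ
  have hadj : ∀ s t : ℕ, t = s + 1 →
      (fibSumGraph n).Adj (a (J s)) (a (J t)) := by
    rintro s t rfl
    have h := hcyc (J s)
    have he : (⟨((J s).val + 1) % m, Nat.mod_lt _ (by omega)⟩ : Fin m) = J (s + 1) :=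
      Fin.ext (Nat.mod_add_mod s m 1)
    rwa [he] at h
  obtain ⟨i, -, hmax⟩ := Finset.exists_max_image Finset.univ (fun j => (a j).val)
    ⟨⟨0, hm0⟩, Finset.mem_univ _⟩
  set k := i.val with hk
  have hkm : k < m := i.isLt
  have hIk : i = J (k + m) := Fin.ext (by
    show k = (k + m) % m
    rw [Nat.add_mod_right, Nat.mod_eq_of_lt hkm])
  have hmax' : ∀ t : ℕ, (a (J t)).val ≤ (a (J (k + m))).val := by
    intro t
    rw [← hIk]
    exact hmax (J t) (Finset.mem_univ _)
  have hne' : ∀ s t d : ℕ, t = s + d → 0 < d → d < m → a (J t) ≠ a (J s) := by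
    rintro s t d rfl h1 h2 h
    have h3 : (s + d) % m = s % m := congrArg Fin.val (ha h)
    have h4 : m ∣ s + d - s := (Nat.modEq_iff_dvd' (Nat.le_add_right s d)).mp h3.symm
    rw [Nat.add_sub_cancel_left] at h4
    have := Nat.le_of_dvd h1 h4
    omega
  have hlt : ∀ t : ℕ, a (J t) ≠ a (J (k + m)) → (a (J t)).val < (a (J (k + m))).val :=
    fun t h => lt_of_le_of_ne (hmax' t) (fun hv => h (Subtype.ext hv))
  -- distinctness facts
  have nUI : a (J (k + m)) ≠ a (J (k + m - 1)) := hne' (k + m - 1) (k + m) 1 (by omega) one_pos (by omega)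
  have nWI : a (J (k + m + 1)) ≠ a (J (k + m)) := hne' (k + m) (k + m + 1) 1 rfl one_pos (by omega)
  have nYI : a (J (k + m + 2)) ≠ a (J (k + m)) := hne' (k + m) (k + m + 2) 2 rfl (by omega) (by omega)
  have nPI : a (J (k + m)) ≠ a (J (k + m - 2)) := hne' (k + m - 2) (k + m) 2 (by omega) (by omega) (by omega)
  have nUW : a (J (k + m + 1)) ≠ a (J (k + m - 1)) := hne' (k + m - 1) (k + m + 1) 2 (by omega) (by omega) (by omega)
  have nYU : a (J (k + m + 2)) ≠ a (J (k + m - 1)) := hne' (k + m - 1) (k + m + 2) 3 (by omega) (by omega) (by omega)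
  have nPW : a (J (k + m + 1)) ≠ a (J (k + m - 2)) := hne' (k + m - 2) (k + m + 1) 3 (by omega) (by omega) (by omega)
  -- edges
  have e1 := hadj (k + m - 1) (k + m) (by omega)
  have e2 := hadj (k + m) (k + m + 1) rfl
  have e3 := hadj (k + m + 1) (k + m + 2) rfl
  have e4 := hadj (k + m - 2) (k + m - 1) (by omega)
  -- the maximum is at least 6
  have hM6 : 6 ≤ (a (J (k + m))).val := by
    have hsub : Finset.image (fun j => (a j).val) Finset.univ ⊆
        Finset.Icc 1 ((a (J (k + m))).val) := by
      intro x hx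
      simp only [Finset.mem_image] at hx
      obtain ⟨j, -, rfl⟩ := hx
      refine Finset.mem_Icc.mpr ⟨(a j).2.1, ?_⟩
      rw [← hIk]
      exact hmax j (Finset.mem_univ _)
    have hc1 : (Finset.image (fun j => (a j).val) Finset.univ).card = m := by
      rw [Finset.card_image_of_injective _ (fun x y h => ha (Subtype.val_injective h)),
        Finset.card_univ, Fintype.card_fin]
    have hcard := Finset.card_le_card hsub
    rw [hc1, Nat.card_Icc] at hcard
    omega
  obtain ⟨-, p, hp⟩ := e1
  obtain ⟨-, q, hq⟩ := e2
  obtain ⟨-, r1, hr1⟩ := e3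
  obtain ⟨-, r2, hr2⟩ := e4
  rcases lt_or_gt_of_ne
      (show (a (J (k + m - 1))).val ≠ (a (J (k + m + 1))).val from
        fun hv => nUW (Subtype.ext hv.symm)) with hc | hc
  · -- u = a(J(k+m-1)) < w = a(J(k+m+1)); chord from k+m-1 to k+m+2
    obtain ⟨t, ht⟩ := chord_arith (a (J (k + m))).val (a (J (k + m - 1))).val
      (a (J (k + m + 1))).val (a (J (k + m + 2))).val p q r1
      (a _).2.1 hc (hlt _ nWI) (hlt _ nYI) hM6 hp
      (hq.trans (Nat.add_comm _ _)) hr1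
    refine ⟨J (k + m - 1), ?_⟩
    have hfin : (⟨((J (k + m - 1)).val + 3) % m, Nat.mod_lt _ (by omega)⟩ : Fin m)
        = J (k + m + 2) := by
      apply Fin.ext
      show ((k + m - 1) % m + 3) % m = (k + m + 2) % m
      rw [Nat.mod_add_mod]
      congr 1
      omega
    rw [hfin]
    exact ⟨fun h => nYU h.symm, t, ht⟩
  · -- u = a(J(k+m+1)) < w = a(J(k+m-1)); chord from k+m-2 to k+m+1
    obtain ⟨t, ht⟩ := chord_arith (a (J (k + m))).val (a (J (k + m + 1))).val
      (a (J (k + m - 1))).val (a (J (k + m - 2))).val q p r2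
      (a _).2.1 hc (hlt _ nUI.symm) (hlt _ nPI.symm) hM6
      (hq.trans (Nat.add_comm _ _)) hp (hr2.trans (Nat.add_comm _ _))
    refine ⟨J (k + m - 2), ?_⟩
    have hfin : (⟨((J (k + m - 2)).val + 3) % m, Nat.mod_lt _ (by omega)⟩ : Fin m)
        = J (k + m + 1) := by
      apply Fin.ext
      show ((k + m - 2) % m + 3) % m = (k + m + 1) % m
      rw [Nat.mod_add_mod]
      congr 1
      omega
    rw [hfin]
    exact ⟨nPW.symm, t, ht.trans (Nat.add_comm _ _)⟩
end
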